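/- arXiv:2210.01257 — 4 statements merged into one kernel-verified Lean document; each statement's English description precedes it below -/
import Mathlib

section
/- Let B ∈ M(m×n, ℂ), let L ≥ 1 be an integer, and let A_1, …, A_L be any composable sequence of complex matrices with A_L ⋯ A_1 = B. Then (‖B‖^S_{2/L})^{2/L} ≤ (Π_{l=1}^{L} ‖A_l‖_2^2)^{1/L} ≤ (1/L) Σ_{l=1}^{L} ‖A_l‖_2^2. -/
/-!
STATEMENT 7: for any composable factorization `A_L ⋯ A_1 = B` into `L` factors,
`(‖B‖^S_{2/L})^{2/L} ≤ (∏ ‖A_l‖_2^2)^{1/L} ≤ (1/L) ∑ ‖A_l‖_2^2`.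
-/

open scoped BigOperators

/-- Schatten `p`-norm of a rectangular complex matrix. -/
noncomputable def schattenNorm {m n : ℕ} (p : ℝ) (A : Matrix (Fin m) (Fin n) ℂ) : ℝ :=
  (∑ i, Real.sqrt ((Matrix.isHermitian_conjTranspose_mul_self A).eigenvalues i) ^ p) ^ (1 / p)

/-- Frobenius (Euclidean) norm of a complex matrix. -/
noncomputable def frobNorm {m n : ℕ} (A : Matrix (Fin m) (Fin n) ℂ) : ℝ :=
  Real.sqrt (∑ i, ∑ j, ‖A i j‖ ^ 2)

/-- Ordered product `A_{L−1} ⋯ A_1 A_0` of a composable sequence of matrices with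
dimension profile `d` (so `A l` has size `d (l+1) × d l`). -/
noncomputable def chainProd (d : ℕ → ℕ) (A : ∀ l : ℕ, Matrix (Fin (d (l + 1))) (Fin (d l)) ℂ) :
    ∀ L : ℕ, Matrix (Fin (d L)) (Fin (d 0)) ℂ
  | 0 => 1
  | (L + 1) => A L * chainProd d A L

section Aux

open Finset

theorem abel_nonpos : ∀ (n : ℕ) (c d : ℕ → ℝ),
    (∀ i j, i ≤ j → j < n → c j ≤ c i) → (∀ i, i < n → 0 ≤ c i) →
    (∀ k, k ≤ n → ∑ i ∈ range k, d i ≤ 0) → ∑ i ∈ range n, c i * d i ≤ 0 := by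
  intro n
  induction n with
  | zero => intro c d _ _ _; simp
  | succ n ih =>
    intro c d hmono hpos hpre
    have e1 : ∑ i ∈ range n, (c i - c n) * d i
        = ∑ i ∈ range n, c i * d i - c n * ∑ i ∈ range n, d i := by
      rw [Finset.mul_sum, ← Finset.sum_sub_distrib]
      exact Finset.sum_congr rfl fun i _ => by ring
    have key : ∑ i ∈ range (n+1), c i * d i
        = (∑ i ∈ range n, (c i - c n) * d i) + c n * ∑ i ∈ range (n+1), d i := by
      rw [e1, Finset.sum_range_succ (f := d), Finset.sum_range_succ (f := fun i => c i * d i)]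
      ring
    rw [key]
    have h1 : ∑ i ∈ range n, (c i - c n) * d i ≤ 0 := by
      apply ih
      · intro i j hij hj
        have := hmono i j hij (by omega)
        linarith
      · intro i hi
        have := hmono i n (by omega) (by omega)
        linarith
      · intro k hk; exact hpre k (by omega)
    have h2 : c n * ∑ i ∈ range (n+1), d i ≤ 0 :=
      mul_nonpos_of_nonneg_of_nonpos (hpos n (by omega)) (hpre (n+1) le_rfl)
    linarith

/-- Log-majorization with positive entries implies sum inequality. -/
theorem logmaj_sum_le (n : ℕ) (x y : ℕ → ℝ)
    (hx : ∀ i, i < n → 0 < x i) (hy : ∀ i, i < n → 0 < y i)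
    (hxa : ∀ i j, i ≤ j → j < n → x j ≤ x i)
    (hpre : ∀ k, k ≤ n → ∏ i ∈ range k, x i ≤ ∏ i ∈ range k, y i) :
    ∑ i ∈ range n, x i ≤ ∑ i ∈ range n, y i := by
  set u : ℕ → ℝ := fun i => Real.log (x i) with hu
  set v : ℕ → ℝ := fun i => Real.log (y i) with hv
  have key1 : ∀ k, k ≤ n → ∑ i ∈ range k, (u i - v i) ≤ 0 := by
    intro k hk
    rw [Finset.sum_sub_distrib]
    have hxlog : Real.log (∏ i ∈ range k, x i) = ∑ i ∈ range k, u i :=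
      Real.log_prod (fun i hi => (hx i (by simp at hi; omega)).ne')
    have hylog : Real.log (∏ i ∈ range k, y i) = ∑ i ∈ range k, v i :=
      Real.log_prod (fun i hi => (hy i (by simp at hi; omega)).ne')
    have hxpos : 0 < ∏ i ∈ range k, x i :=
      Finset.prod_pos fun i hi => hx i (by simp at hi; omega)
    have := Real.log_le_log hxpos (hpre k hk)
    rw [hxlog, hylog] at this
    linarith
  have key2 : ∀ i, i < n → x i - y i ≤ x i * (u i - v i) := by
    intro i hi
    have hex : Real.exp (u i) = x i := Real.exp_log (hx i hi)
    have hev : Real.exp (v i) = y i := Real.exp_log (hy i hi)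
    have h := Real.add_one_le_exp (v i - u i)
    have h2 : (v i - u i + 1) * Real.exp (u i) ≤ Real.exp (v i - u i) * Real.exp (u i) := by
      apply mul_le_mul_of_nonneg_right h (Real.exp_nonneg _)
    rw [← Real.exp_add] at h2
    have h3 : v i - u i + u i = v i := by ring
    rw [h3, hex, hev] at h2
    nlinarith [hx i hi]
  have key3 : ∑ i ∈ range n, x i * (u i - v i) ≤ 0 := by
    apply abel_nonpos n x (fun i => u i - v i) hxa (fun i hi => (hx i hi).le) key1
  have : ∑ i ∈ range n, (x i - y i) ≤ ∑ i ∈ range n, x i * (u i - v i) :=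
    Finset.sum_le_sum fun i hi => key2 i (by simp at hi; omega)
  rw [Finset.sum_sub_distrib] at this
  linarith

/-- Weak log-majorization (prefix products) for antitone nonneg sequences implies
the sum inequality. -/
theorem maj_sum_le (n : ℕ) (x y : ℕ → ℝ)
    (hx0 : ∀ i, 0 ≤ x i) (hy0 : ∀ i, 0 ≤ y i)
    (hxa : ∀ i j, i ≤ j → x j ≤ x i) (hya : ∀ i j, i ≤ j → y j ≤ y i)
    (hpre : ∀ k, k ≤ n → ∏ i ∈ range k, x i ≤ ∏ i ∈ range k, y i) :
    ∑ i ∈ range n, x i ≤ ∑ i ∈ range n, y i := by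
  apply le_of_forall_pos_le_add
  intro ε hε
  set δ := ε / (n + 1) with hδ
  have hδpos : 0 < δ := by positivity
  set y' : ℕ → ℝ := fun i => max (y i) δ with hy'
  have hy'pos : ∀ i, 0 < y' i := fun i => lt_max_of_lt_right hδpos
  have hy'a : ∀ i j, i ≤ j → y' j ≤ y' i := fun i j hij =>
    max_le_max (hya i j hij) le_rfl
  have hy'le : ∀ i, y' i ≤ y i + δ := fun i =>
    max_le (by linarith [hδpos]) (by linarith [hy0 i])
  have hpre' : ∀ k, k ≤ n → ∏ i ∈ range k, x i ≤ ∏ i ∈ range k, y' i := by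
    intro k hk
    refine (hpre k hk).trans (Finset.prod_le_prod (fun i _ => hy0 i) (fun i _ => le_max_left _ _))
  -- main: ∑ x ≤ ∑ y'
  have main : ∑ i ∈ range n, x i ≤ ∑ i ∈ range n, y' i := by
    by_cases hex : ∃ i, x i = 0
    · -- r = least index with x r = 0
      classical
      set r := Nat.find hex with hr
      have hxr : x r = 0 := Nat.find_spec hex
      have hxpos : ∀ i, i < r → 0 < x i := by
        intro i hi
        rcases (hx0 i).lt_or_eq with h | h
        · exact h
        · exact absurd h.symm (Nat.find_min hex hi)
      have hxzero : ∀ i, r ≤ i → x i = 0 := fun i hi =>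
        le_antisymm (hxr ▸ hxa r i hi) (hx0 i)
      by_cases hrn : r ≤ n
      · have split : ∑ i ∈ range n, x i = ∑ i ∈ range r, x i := by
          rw [← Finset.sum_subset (Finset.range_subset_range.2 hrn)]
          intro i hi hni
          exact hxzero i (by simp at hni ⊢; omega)
        rw [split]
        have core : ∑ i ∈ range r, x i ≤ ∑ i ∈ range r, y' i := by
          apply logmaj_sum_le r x y' hxpos (fun i _ => hy'pos i)
            (fun i j hij _ => hxa i j hij)
            (fun k hk => hpre' k (le_trans hk hrn))
        refine core.trans (Finset.sum_le_sum_of_subset_of_nonneg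
          (Finset.range_subset_range.2 hrn) (fun i _ _ => (hy'pos i).le))
      · push_neg at hrn
        exact logmaj_sum_le n x y' (fun i hi => hxpos i (by omega)) (fun i _ => hy'pos i)
          (fun i j hij _ => hxa i j hij) hpre'
    · push_neg at hex
      have hxpos : ∀ i, i < n → 0 < x i := fun i _ => (hx0 i).lt_of_ne' (hex i)
      exact logmaj_sum_le n x y' hxpos (fun i _ => hy'pos i)
        (fun i j hij _ => hxa i j hij) hpre'
  calc ∑ i ∈ range n, x i ≤ ∑ i ∈ range n, y' i := main
    _ ≤ ∑ i ∈ range n, (y i + δ) := Finset.sum_le_sum fun i _ => hy'le i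
    _ = ∑ i ∈ range n, y i + n * δ := by rw [Finset.sum_add_distrib]; simp [mul_comm]
    _ ≤ ∑ i ∈ range n, y i + ε := by
        have : (n : ℝ) * δ ≤ ε := by
          rw [hδ]
          rw [div_eq_inv_mul, ← mul_assoc]
          have h1 : (n : ℝ) * ((n : ℝ) + 1)⁻¹ ≤ 1 := by
            rw [mul_inv_le_iff₀ (by positivity)]
            linarith
          nlinarith
        linarith

/-- Generalized Hölder / AM-GM: `∑_i ∏_l (z l i)^(1/L) ≤ ∏_l (∑_i z l i)^(1/L)`. -/
theorem holder_prod (L N : ℕ) (hL : 1 ≤ L) (z : ℕ → ℕ → ℝ)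
    (hz : ∀ l i, 0 ≤ z l i) :
    ∑ i ∈ range N, ∏ l ∈ range L, (z l i) ^ (1 / (L:ℝ))
      ≤ ∏ l ∈ range L, (∑ i ∈ range N, z l i) ^ (1 / (L:ℝ)) := by
  have hLpos : (0:ℝ) < L := by exact_mod_cast hL
  have hinv : 0 < 1 / (L:ℝ) := by positivity
  set S : ℕ → ℝ := fun l => ∑ i ∈ range N, z l i with hS
  have hSnn : ∀ l, 0 ≤ S l := fun l => Finset.sum_nonneg fun i _ => hz l i
  by_cases hzero : ∃ l ∈ range L, S l = 0
  · obtain ⟨l₀, hl₀, hSl₀⟩ := hzero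
    have hz0 : ∀ i ∈ range N, z l₀ i = 0 := by
      intro i hi
      exact (Finset.sum_eq_zero_iff_of_nonneg (fun j _ => hz l₀ j)).1 hSl₀ i hi
    have lhs0 : ∑ i ∈ range N, ∏ l ∈ range L, (z l i) ^ (1 / (L:ℝ)) = 0 := by
      apply Finset.sum_eq_zero
      intro i hi
      apply Finset.prod_eq_zero hl₀
      rw [hz0 i hi, Real.zero_rpow hinv.ne']
    have rhs0 : ∏ l ∈ range L, (S l) ^ (1 / (L:ℝ)) = 0 := by
      apply Finset.prod_eq_zero hl₀
      rw [hSl₀, Real.zero_rpow hinv.ne']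
    rw [lhs0, rhs0]
  · push_neg at hzero
    have hSpos : ∀ l ∈ range L, 0 < S l := fun l hl => (hSnn l).lt_of_ne' (hzero l hl)
    have step : ∀ i ∈ range N,
        ∏ l ∈ range L, (z l i) ^ (1 / (L:ℝ))
          = (∏ l ∈ range L, (S l) ^ (1 / (L:ℝ))) * ∏ l ∈ range L, (z l i / S l) ^ (1 / (L:ℝ)) := by
      intro i _
      rw [← Finset.prod_mul_distrib]
      apply Finset.prod_congr rfl
      intro l hl
      rw [← Real.mul_rpow (hSnn l) (div_nonneg (hz l i) (hSnn l))]
      rw [mul_div_cancel₀ _ (hSpos l hl).ne']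
    rw [Finset.sum_congr rfl step, ← Finset.mul_sum]
    have amgm : ∑ i ∈ range N, ∏ l ∈ range L, (z l i / S l) ^ (1 / (L:ℝ)) ≤ 1 := by
      have pt : ∀ i ∈ range N, ∏ l ∈ range L, (z l i / S l) ^ (1 / (L:ℝ))
          ≤ ∑ l ∈ range L, (1/(L:ℝ)) * (z l i / S l) := by
        intro i _
        exact Real.geom_mean_le_arith_mean_weighted (range L) (fun _ => 1/(L:ℝ))
          (fun l => z l i / S l) (fun l _ => hinv.le)
          (by simp [Finset.sum_const, Finset.card_range]; field_simp)
          (fun l hl => div_nonneg (hz l i) (hSnn l))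
      calc ∑ i ∈ range N, ∏ l ∈ range L, (z l i / S l) ^ (1 / (L:ℝ))
          ≤ ∑ i ∈ range N, ∑ l ∈ range L, (1/(L:ℝ)) * (z l i / S l) :=
            Finset.sum_le_sum pt
        _ = ∑ l ∈ range L, (1/(L:ℝ)) * ((∑ i ∈ range N, z l i) / S l) := by
            rw [Finset.sum_comm]
            apply Finset.sum_congr rfl
            intro l _
            rw [← Finset.mul_sum, ← Finset.sum_div]
        _ = ∑ l ∈ range L, (1/(L:ℝ)) := by
            apply Finset.sum_congr rfl
            intro l hl
            have : (∑ i ∈ range N, z l i) / S l = 1 := div_self (hSpos l hl).ne'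
            rw [this, mul_one]
        _ = 1 := by simp [Finset.sum_const, Finset.card_range]; field_simp
    calc (∏ l ∈ range L, (S l) ^ (1 / (L:ℝ)))
          * ∑ i ∈ range N, ∏ l ∈ range L, (z l i / S l) ^ (1 / (L:ℝ))
        ≤ (∏ l ∈ range L, (S l) ^ (1 / (L:ℝ))) * 1 := by
          apply mul_le_mul_of_nonneg_left amgm
          exact Finset.prod_nonneg fun l _ => Real.rpow_nonneg (hSnn l) _
      _ = ∏ l ∈ range L, (S l) ^ (1 / (L:ℝ)) := mul_one _

open Finset Equiv Matrix

section CauchyBinet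

variable {R : Type*} [CommRing R] {k N : ℕ}

theorem cauchy_binet (A : Matrix (Fin k) (Fin N) R) (B : Matrix (Fin N) (Fin k) R) :
    (A * B).det = ∑ S : {s : Finset (Fin N) // s.card = k},
      (A.submatrix id (S.1.orderEmbOfFin S.2)).det * (B.submatrix (S.1.orderEmbOfFin S.2) id).det := by
  classical
  have step1 : (A * B).det
      = ∑ p : Fin k → Fin N, (∏ i, B (p i) i) * (A.submatrix id p).det := by
    have expand : (A * B).det
        = ∑ p : Fin k → Fin N, ∑ σ : Perm (Fin k),
            ((Equiv.Perm.sign σ : ℤ) : R) * ∏ i, A (σ i) (p i) * B (p i) i := by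
      simp only [det_apply', mul_apply, prod_univ_sum, mul_sum, Fintype.piFinset_univ]
      rw [Finset.sum_comm]
    rw [expand]
    apply Finset.sum_congr rfl
    intro p _
    rw [det_apply', Finset.mul_sum]
    apply Finset.sum_congr rfl
    intro σ _
    rw [Finset.prod_mul_distrib]
    simp only [submatrix_apply, id_eq]
    ring
  have step2 : ∑ p : Fin k → Fin N, (∏ i, B (p i) i) * (A.submatrix id p).det
      = ∑ p ∈ Finset.univ.filter (fun p : Fin k → Fin N => Function.Injective p),
          (∏ i, B (p i) i) * (A.submatrix id p).det := by
    symm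
    apply Finset.sum_subset (Finset.filter_subset _ _)
    intro p _ hp
    simp only [Finset.mem_filter, Finset.mem_univ, true_and] at hp
    rw [Function.Injective] at hp
    push_neg at hp
    obtain ⟨i, j, hpij, hij⟩ := hp
    have : (A.submatrix id p).det = 0 :=
      Matrix.det_zero_of_column_eq hij (fun x => by simp [hpij])
    rw [this, mul_zero]
  have hcard : ∀ p : Fin k → Fin N, Function.Injective p →
      (Finset.univ.image p).card = k := by
    intro p hp
    rw [Finset.card_image_of_injective _ hp, Finset.card_univ, Fintype.card_fin]
  have step3 : ∑ p ∈ Finset.univ.filter (fun p : Fin k → Fin N => Function.Injective p),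
          (∏ i, B (p i) i) * (A.submatrix id p).det
      = ∑ q : {s : Finset (Fin N) // s.card = k} × Perm (Fin k),
          (∏ i, B ((q.1.1.orderEmbOfFin q.1.2) (q.2 i)) i) *
            (((Equiv.Perm.sign q.2 : ℤ) : R) * (A.submatrix id (q.1.1.orderEmbOfFin q.1.2)).det) := by
    -- tools for the forward map
    have hmem : ∀ (p : Fin k → Fin N) (i : Fin k), p i ∈ Finset.univ.image p := by
      intro p i; simp [Finset.mem_image]
    refine Finset.sum_bij'
      (i := fun p hp => (⟨⟨Finset.univ.image p,
          hcard p (by simpa using (Finset.mem_filter.1 hp).2)⟩,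
        Equiv.ofBijective
          (fun i => (Finset.orderIsoOfFin _
              (hcard p (by simpa using (Finset.mem_filter.1 hp).2))).symm ⟨p i, hmem p i⟩)
          (Finite.injective_iff_bijective.1 (fun a b hab => by
            have hinj : Function.Injective p := by
              simpa using (Finset.mem_filter.1 hp).2
            have := congrArg (fun x => ((Finset.orderIsoOfFin _
              (hcard p hinj)) x : Fin N)) hab
            simp only [OrderIso.apply_symm_apply] at this
            exact hinj this))⟩))
      (j := fun q _ => fun i => (q.1.1.orderEmbOfFin q.1.2) (q.2 i))
      ?_ ?_ ?_ ?_ ?_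
    · intro p hp; exact Finset.mem_univ _
    · intro q _
      simp only [Finset.mem_filter, Finset.mem_univ, true_and]
      exact (q.1.1.orderEmbOfFin q.1.2).injective.comp q.2.injective
    · -- left inverse
      intro p hp
      funext i
      have hinj : Function.Injective p := by simpa using (Finset.mem_filter.1 hp).2
      simp only [Equiv.ofBijective_apply]
      rw [← Finset.coe_orderIsoOfFin_apply, OrderIso.apply_symm_apply]
    · -- right inverse
      intro q _
      obtain ⟨⟨S, hS⟩, τ⟩ := q
      set p : Fin k → Fin N := fun i => (S.orderEmbOfFin hS) (τ i) with hp
      have hinj : Function.Injective p :=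
        (S.orderEmbOfFin hS).injective.comp τ.injective
      have himg : Finset.univ.image p = S := by
        apply Finset.eq_of_subset_of_card_le
        · intro x hx
          simp only [Finset.mem_image] at hx
          obtain ⟨i, _, rfl⟩ := hx
          exact Finset.orderEmbOfFin_mem S hS (τ i)
        · rw [hcard p hinj, hS]
      have hemb : S.orderEmbOfFin hS
          = (Finset.univ.image p).orderEmbOfFin (hcard p hinj) := by
        apply Finset.orderEmbOfFin_unique'
        intro x
        rw [himg]
        exact Finset.orderEmbOfFin_mem S hS x
      refine Prod.ext ?_ ?_
      · exact Subtype.ext himg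
      · simp only
        apply Equiv.ext
        intro i
        simp only [Equiv.ofBijective_apply]
        rw [OrderIso.symm_apply_eq]
        apply Subtype.ext
        rw [Finset.coe_orderIsoOfFin_apply, ← hemb]
    · -- values agree
      intro p hp
      have hinj : Function.Injective p := by simpa using (Finset.mem_filter.1 hp).2
      set S' := Finset.univ.image p with hS'
      set τ' : Perm (Fin k) := Equiv.ofBijective
          (fun i => (Finset.orderIsoOfFin _ (hcard p hinj)).symm ⟨p i, hmem p i⟩)
          (Finite.injective_iff_bijective.1 (fun a b hab => by
            have := congrArg (fun x => ((Finset.orderIsoOfFin _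
              (hcard p hinj)) x : Fin N)) hab
            simp only [OrderIso.apply_symm_apply] at this
            exact hinj this)) with hτ'
      have hfact : ∀ i, (S'.orderEmbOfFin (hcard p hinj)) (τ' i) = p i := by
        intro i
        simp only [hτ', Equiv.ofBijective_apply]
        rw [← Finset.coe_orderIsoOfFin_apply, OrderIso.apply_symm_apply]
      have hsub : A.submatrix id p
          = (A.submatrix id (S'.orderEmbOfFin (hcard p hinj))).submatrix id ⇑τ' := by
        rw [Matrix.submatrix_submatrix,
          show (⇑(S'.orderEmbOfFin (hcard p hinj)) ∘ ⇑τ') = p from funext hfact]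
        rfl
      have hdet : (A.submatrix id p).det
          = ((Equiv.Perm.sign τ' : ℤ) : R)
            * (A.submatrix id (S'.orderEmbOfFin (hcard p hinj))).det := by
        rw [hsub, Matrix.det_permute']
      have hprod : (∏ i, B (p i) i) = ∏ i, B ((S'.orderEmbOfFin (hcard p hinj)) (τ' i)) i := by
        apply Finset.prod_congr rfl
        intro i _
        rw [hfact i]
      rw [hdet, hprod]
  rw [step1, step2, step3]
  rw [Fintype.sum_prod_type]
  apply Finset.sum_congr rfl
  intro S _
  rw [det_apply' (M := B.submatrix (S.1.orderEmbOfFin S.2) id), Finset.mul_sum]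
  apply Finset.sum_congr rfl
  intro τ _
  simp only [submatrix_apply, id_eq]
  ring

end CauchyBinet

section Gram

/-- Sum of squared absolute values of the maximal minors of a tall matrix. -/
noncomputable def gram {N k : ℕ} (X : Matrix (Fin N) (Fin k) ℂ) : ℝ :=
  ∑ S : {s : Finset (Fin N) // s.card = k},
    Complex.normSq ((X.submatrix (S.1.orderEmbOfFin S.2) id).det)

theorem gram_nonneg {N k : ℕ} (X : Matrix (Fin N) (Fin k) ℂ) : 0 ≤ gram X :=
  Finset.sum_nonneg fun S _ => Complex.normSq_nonneg _

theorem det_conjTranspose_mul_self_eq_gram {N k : ℕ} (X : Matrix (Fin N) (Fin k) ℂ) :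
    (Xᴴ * X).det = (gram X : ℂ) := by
  rw [cauchy_binet]
  rw [_root_.gram, Complex.ofReal_sum]
  apply Finset.sum_congr rfl
  intro S _
  have h1 : Xᴴ.submatrix id ⇑(S.1.orderEmbOfFin S.2)
      = (X.submatrix (⇑(S.1.orderEmbOfFin S.2)) id)ᴴ := by
    rw [Matrix.conjTranspose_submatrix]
  rw [h1, Matrix.det_conjTranspose]
  rw [Complex.star_def, mul_comm, Complex.mul_conj]

end Gram

section Sorted

open Matrix

variable {a b k : ℕ}

/-- Descending rearrangement of the eigenvalues of a hermitian matrix. -/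
noncomputable def dEig {H : Matrix (Fin b) (Fin b) ℂ} (hH : H.IsHermitian) : Fin b → ℝ :=
  fun i => hH.eigenvalues (Tuple.sort hH.eigenvalues i.rev)

theorem dEig_antitone {H : Matrix (Fin b) (Fin b) ℂ} (hH : H.IsHermitian) :
    ∀ i j : Fin b, i ≤ j → dEig hH j ≤ dEig hH i := by
  intro i j hij
  exact Tuple.monotone_sort hH.eigenvalues (Fin.rev_le_rev.2 hij)

theorem sum_dEig {H : Matrix (Fin b) (Fin b) ℂ} (hH : H.IsHermitian) :
    ∑ i, dEig hH i = ∑ i, hH.eigenvalues i := by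
  rw [← Equiv.sum_comp ((Fin.revPerm).trans (Tuple.sort hH.eigenvalues)) hH.eigenvalues]
  rfl

theorem prod_dEig_eq {H : Matrix (Fin b) (Fin b) ℂ} (hH : H.IsHermitian) (T : Finset (Fin b)) :
    ∃ T' : Finset (Fin b), T'.card = T.card ∧ ∏ j ∈ T, hH.eigenvalues j = ∏ j ∈ T', dEig hH j := by
  classical
  set σ : Equiv.Perm (Fin b) := (Fin.revPerm).trans (Tuple.sort hH.eigenvalues) with hσ
  have hval : ∀ j, hH.eigenvalues j = dEig hH (σ.symm j) := by
    intro j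
    show hH.eigenvalues j = hH.eigenvalues (σ (σ.symm j))
    rw [Equiv.apply_symm_apply]
  refine ⟨T.image σ.symm, Finset.card_image_of_injective _ σ.symm.injective, ?_⟩
  rw [Finset.prod_image (fun x _ y _ h => σ.symm.injective h)]
  exact Finset.prod_congr rfl fun j _ => hval j

/-- A strictly monotone map `Fin k → Fin b` satisfies `i ≤ f i`. -/
theorem fin_strictMono_le {f : Fin k → Fin b} (hf : StrictMono f) (i : Fin k) :
    (i : ℕ) ≤ (f i : ℕ) := by
  have main : ∀ n : ℕ, ∀ i : Fin k, (i : ℕ) = n → n ≤ (f i : ℕ) := by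
    intro n
    induction n using Nat.strong_induction_on with
    | _ n ih =>
      intro i hi
      match n, hi with
      | 0, _ => exact Nat.zero_le _
      | (m+1), hi =>
        have hm : m < (i : ℕ) := by omega
        set j : Fin k := ⟨m, by omega⟩ with hj
        have hji : j < i := by
          rw [Fin.lt_def]; simpa [hj] using hm
        have h1 : f j < f i := hf hji
        have h2 : m ≤ (f j : ℕ) := ih m (by omega) j rfl
        have h3 : (f j : ℕ) < (f i : ℕ) := h1
        omega
  exact main _ i rfl

/-- Product over any `k`-subset is at most the product of the `k` largest values. -/
theorem prod_subset_le_top {g : Fin b → ℝ}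
    (hga : ∀ i j : Fin b, i ≤ j → g j ≤ g i) (hg0 : ∀ i, 0 ≤ g i)
    (T : Finset (Fin b)) (hT : T.card = k) (hk : k ≤ b) :
    ∏ j ∈ T, g j ≤ ∏ i : Fin k, g ⟨i, lt_of_lt_of_le i.2 hk⟩ := by
  classical
  have himg : T = Finset.univ.image (T.orderEmbOfFin hT) := by
    apply Finset.coe_injective
    rw [Finset.coe_image, Finset.coe_univ, Set.image_univ, Finset.range_orderEmbOfFin]
  have h1 : ∏ j ∈ T, g j = ∏ i : Fin k, g (T.orderEmbOfFin hT i) := by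
    conv_lhs => rw [himg]
    rw [Finset.prod_image (fun x _ y _ h => (T.orderEmbOfFin hT).injective h)]
  rw [h1]
  apply Finset.prod_le_prod
  · intro i _; exact hg0 _
  · intro i _
    apply hga
    show (⟨i, _⟩ : Fin b) ≤ T.orderEmbOfFin hT i
    have := fin_strictMono_le (T.orderEmbOfFin hT).strictMono i
    exact this

/-- Zero-extended descending squared singular values of a rectangular matrix. -/
noncomputable def sv2 (M : Matrix (Fin a) (Fin b) ℂ) : ℕ → ℝ :=
  fun i => if h : i < b then dEig (Matrix.isHermitian_conjTranspose_mul_self M) ⟨i, h⟩ else 0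

theorem sv2_nonneg (M : Matrix (Fin a) (Fin b) ℂ) (i : ℕ) : 0 ≤ sv2 M i := by
  unfold sv2
  split
  · exact Matrix.eigenvalues_conjTranspose_mul_self_nonneg M _
  · exact le_refl 0

theorem sv2_antitone (M : Matrix (Fin a) (Fin b) ℂ) :
    ∀ i j : ℕ, i ≤ j → sv2 M j ≤ sv2 M i := by
  intro i j hij
  unfold sv2
  by_cases hj : j < b
  · have hi : i < b := lt_of_le_of_lt hij hj
    rw [dif_pos hj, dif_pos hi]
    exact dEig_antitone _ ⟨i, hi⟩ ⟨j, hj⟩ hij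
  · rw [dif_neg hj]
    exact sv2_nonneg M i

theorem prod_sv2_eq {M : Matrix (Fin a) (Fin b) ℂ} (hk : k ≤ b) :
    ∏ i ∈ Finset.range k, sv2 M i
      = ∏ i : Fin k, dEig (Matrix.isHermitian_conjTranspose_mul_self M) ⟨i, lt_of_lt_of_le i.2 hk⟩ := by
  rw [← Fin.prod_univ_eq_prod_range (fun i => sv2 M i) k]
  apply Finset.prod_congr rfl
  intro i _
  have h : (i:ℕ) < b := lt_of_lt_of_le i.2 hk
  simp [sv2, h]

theorem prod_range_sv2_nonneg (M : Matrix (Fin a) (Fin b) ℂ) (k : ℕ) :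
    0 ≤ ∏ i ∈ Finset.range k, sv2 M i :=
  Finset.prod_nonneg fun i _ => sv2_nonneg M i

end Sorted

section Compression

open Matrix

variable {a b k : ℕ}

theorem gram_eq_of_conj {N N' k : ℕ} {X : Matrix (Fin N) (Fin k) ℂ} {Y : Matrix (Fin N') (Fin k) ℂ}
    (h : Xᴴ * X = Yᴴ * Y) : gram X = gram Y := by
  have h1 := det_conjTranspose_mul_self_eq_gram X
  have h2 := det_conjTranspose_mul_self_eq_gram Y
  rw [h] at h1
  rw [h2] at h1
  exact_mod_cast h1.symm

theorem prod_comp_orderEmbOfFin (g : Fin b → ℝ) (T : Finset (Fin b)) (hT : T.card = k) :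
    ∏ i : Fin k, g (T.orderEmbOfFin hT i) = ∏ j ∈ T, g j := by
  classical
  have himg : T = Finset.univ.image (T.orderEmbOfFin hT) := by
    apply Finset.coe_injective
    rw [Finset.coe_image, Finset.coe_univ, Set.image_univ, Finset.range_orderEmbOfFin]
  conv_rhs => rw [himg]
  rw [Finset.prod_image (fun x _ y _ h => (T.orderEmbOfFin hT).injective h)]

theorem unitary_mul_star {n : ℕ} (W : Matrix.unitaryGroup (Fin n) ℂ) :
    (W : Matrix (Fin n) (Fin n) ℂ) * (W : Matrix (Fin n) (Fin n) ℂ)ᴴ = 1 := by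
  rw [← Matrix.star_eq_conjTranspose]
  exact (Unitary.mem_iff.mp W.2).2

theorem star_mul_unitary {n : ℕ} (W : Matrix.unitaryGroup (Fin n) ℂ) :
    (W : Matrix (Fin n) (Fin n) ℂ)ᴴ * (W : Matrix (Fin n) (Fin n) ℂ) = 1 := by
  rw [← Matrix.star_eq_conjTranspose]
  exact (Unitary.mem_iff.mp W.2).1

/-- Compression bound: for any isometry `Q` (k columns), the Gram sum of `M * Q` is at most
the product of the k largest squared singular values of `M`. -/
theorem gram_mul_frame_le (M : Matrix (Fin a) (Fin b) ℂ) (Q : Matrix (Fin b) (Fin k) ℂ)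
    (hQ : Qᴴ * Q = 1) : gram (M * Q) ≤ ∏ i ∈ Finset.range k, sv2 M i := by
  classical
  set hH := Matrix.isHermitian_conjTranspose_mul_self M with hhH
  set lam : Fin b → ℝ := hH.eigenvalues with hlam
  have hlam0 : ∀ i, 0 ≤ lam i := fun i => Matrix.eigenvalues_conjTranspose_mul_self_nonneg M i
  set W : Matrix (Fin b) (Fin b) ℂ := (hH.eigenvectorUnitary : Matrix (Fin b) (Fin b) ℂ) with hW
  set G : Matrix (Fin b) (Fin k) ℂ := Wᴴ * Q with hG
  have hGG : Gᴴ * G = 1 := by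
    rw [hG, Matrix.conjTranspose_mul, Matrix.conjTranspose_conjTranspose,
      Matrix.mul_assoc, ← Matrix.mul_assoc W, unitary_mul_star hH.eigenvectorUnitary,
      Matrix.one_mul, hQ]
  have hspec : Mᴴ * M = W * Matrix.diagonal (fun i => (lam i : ℂ)) * Wᴴ := by
    have := hH.spectral_theorem
    rw [← Matrix.star_eq_conjTranspose]
    convert this using 2
    rfl
  set D : Matrix (Fin b) (Fin b) ℂ := Matrix.diagonal (fun i => (lam i : ℂ)) with hD
  have hMQ : (M * Q)ᴴ * (M * Q) = Gᴴ * (D * G) := by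
    rw [Matrix.conjTranspose_mul]
    calc Qᴴ * Mᴴ * (M * Q) = Qᴴ * (Mᴴ * M) * Q := by
          rw [Matrix.mul_assoc, Matrix.mul_assoc, Matrix.mul_assoc]
      _ = Qᴴ * (W * D * Wᴴ) * Q := by rw [hspec]
      _ = Gᴴ * (D * G) := by
          rw [hG, Matrix.conjTranspose_mul, Matrix.conjTranspose_conjTranspose]
          rw [Matrix.mul_assoc, Matrix.mul_assoc, Matrix.mul_assoc, Matrix.mul_assoc]
  set E : Matrix (Fin b) (Fin k) ℂ :=
    Matrix.diagonal (fun i => (Real.sqrt (lam i) : ℂ)) * G with hE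
  have hEE : Eᴴ * E = Gᴴ * (D * G) := by
    rw [hE, Matrix.conjTranspose_mul, Matrix.diagonal_conjTranspose]
    have hstar : (star fun i => (Real.sqrt (lam i) : ℂ)) = fun i => (Real.sqrt (lam i) : ℂ) := by
      funext i
      simp [Pi.star_apply, Complex.conj_ofReal]
    have hdd : (fun i => (Real.sqrt (lam i) : ℂ) * (Real.sqrt (lam i) : ℂ))
        = fun i => (lam i : ℂ) := by
      funext i
      rw [← Complex.ofReal_mul, Real.mul_self_sqrt (hlam0 i)]
    rw [hstar, Matrix.mul_assoc, ← Matrix.mul_assoc (Matrix.diagonal _) (Matrix.diagonal _) G,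
      Matrix.diagonal_mul_diagonal, hdd]
  have hgramE : gram (M * Q) = gram E := gram_eq_of_conj (by rw [hMQ, hEE])
  -- expand gram E
  have hexp : ∀ S : {s : Finset (Fin b) // s.card = k},
      Complex.normSq ((E.submatrix (S.1.orderEmbOfFin S.2) id).det)
        = (∏ i : Fin k, lam (S.1.orderEmbOfFin S.2 i)) *
          Complex.normSq ((G.submatrix (S.1.orderEmbOfFin S.2) id).det) := by
    intro S
    have hsub : E.submatrix (S.1.orderEmbOfFin S.2) id
        = Matrix.diagonal (fun i => (Real.sqrt (lam (S.1.orderEmbOfFin S.2 i)) : ℂ))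
          * G.submatrix (S.1.orderEmbOfFin S.2) id := by
      ext i j
      simp [hE, Matrix.submatrix_apply, Matrix.diagonal_mul]
    rw [hsub, Matrix.det_mul, Matrix.det_diagonal, Complex.normSq_mul]
    congr 1
    rw [← Complex.ofReal_prod]
    rw [Complex.normSq_ofReal]
    rw [← Finset.prod_mul_distrib]
    apply Finset.prod_congr rfl
    intro i _
    rw [Real.mul_self_sqrt (hlam0 _)]
  have hk : k ≤ b := by
    by_cases hbk : k ≤ b
    · exact hbk
    · exfalso
      push_neg at hbk
      have h1 : (1 : ℝ) = gram G := by
        have := det_conjTranspose_mul_self_eq_gram G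
        rw [hGG, Matrix.det_one] at this
        exact_mod_cast this
      have h2 : gram G = 0 := by
        apply Finset.sum_eq_zero
        intro S _
        exfalso
        have := S.2
        have hle : S.1.card ≤ b := by
          have := Finset.card_le_univ S.1
          simpa using this
        omega
      rw [h2] at h1
      norm_num at h1
  have hbound : ∀ S : {s : Finset (Fin b) // s.card = k},
      ∏ i : Fin k, lam (S.1.orderEmbOfFin S.2 i) ≤ ∏ i ∈ Finset.range k, sv2 M i := by
    intro S
    rw [prod_comp_orderEmbOfFin lam S.1 S.2]
    obtain ⟨T', hT'card, hT'eq⟩ := prod_dEig_eq hH S.1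
    rw [hT'eq]
    rw [prod_sv2_eq (M := M) hk]
    exact prod_subset_le_top (dEig_antitone hH)
      (fun i => Matrix.eigenvalues_conjTranspose_mul_self_nonneg M _) T'
      (hT'card.trans S.2) hk
  have hgramG : gram G = 1 := by
    have := det_conjTranspose_mul_self_eq_gram G
    rw [hGG, Matrix.det_one] at this
    exact_mod_cast this.symm
  calc gram (M * Q) = gram E := hgramE
    _ = ∑ S : {s : Finset (Fin b) // s.card = k},
          (∏ i : Fin k, lam (S.1.orderEmbOfFin S.2 i)) *
            Complex.normSq ((G.submatrix (S.1.orderEmbOfFin S.2) id).det) := by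
        rw [_root_.gram]
        exact Finset.sum_congr rfl fun S _ => hexp S
    _ ≤ ∑ S : {s : Finset (Fin b) // s.card = k},
          (∏ i ∈ Finset.range k, sv2 M i) *
            Complex.normSq ((G.submatrix (S.1.orderEmbOfFin S.2) id).det) := by
        apply Finset.sum_le_sum
        intro S _
        exact mul_le_mul_of_nonneg_right (hbound S) (Complex.normSq_nonneg _)
    _ = (∏ i ∈ Finset.range k, sv2 M i) * gram G := by
        rw [_root_.gram, ← Finset.mul_sum]
    _ = ∏ i ∈ Finset.range k, sv2 M i := by rw [hgramG, mul_one]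

/-- Frame-determinant bound: `|det(Uᴴ M')|² ≤ gram M'`. -/
theorem normSq_det_frame_mul_le (U M' : Matrix (Fin a) (Fin k) ℂ)
    (hU : Uᴴ * U = 1) : Complex.normSq (Uᴴ * M').det ≤ gram M' := by
  classical
  set F : Matrix (Fin k) (Fin k) ℂ := Uᴴ * M' with hF
  set Dm : Matrix (Fin a) (Fin k) ℂ := M' - U * F with hDm
  have h1 : M'ᴴ * U = Fᴴ := by
    rw [hF, Matrix.conjTranspose_mul, Matrix.conjTranspose_conjTranspose]
  have hsum : Fᴴ * F + Dmᴴ * Dm = M'ᴴ * M' := by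
    have h2 : Dmᴴ = M'ᴴ - Fᴴ * Uᴴ := by
      rw [hDm, Matrix.conjTranspose_sub, Matrix.conjTranspose_mul]
    rw [h2, Matrix.sub_mul, Matrix.mul_sub, Matrix.mul_sub]
    have h3 : M'ᴴ * (U * F) = Fᴴ * F := by rw [← Matrix.mul_assoc, h1]
    have h4 : Fᴴ * Uᴴ * M' = Fᴴ * F := by rw [Matrix.mul_assoc, hF]
    have h5 : Fᴴ * Uᴴ * (U * F) = Fᴴ * F := by
      rw [Matrix.mul_assoc, ← Matrix.mul_assoc Uᴴ U F, hU, Matrix.one_mul]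
    rw [h3, h4, h5]
    abel
  set E : Matrix (Fin k ⊕ Fin a) (Fin k) ℂ := Matrix.fromRows F Dm with hEdef
  set E' : Matrix (Fin (k + a)) (Fin k) ℂ :=
    E.submatrix (⇑(finSumFinEquiv (m := k) (n := a)).symm) id with hE'def
  have hE' : E'ᴴ * E' = M'ᴴ * M' := by
    rw [hE'def, Matrix.conjTranspose_submatrix]
    rw [Matrix.submatrix_mul_equiv Eᴴ E id (finSumFinEquiv (m := k) (n := a)).symm id]
    rw [Matrix.submatrix_id_id]
    rw [hEdef, Matrix.conjTranspose_fromRows_eq_fromCols_conjTranspose,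
      Matrix.fromCols_mul_fromRows]
    exact hsum
  have hgram : gram E' = gram M' := gram_eq_of_conj hE'
  -- the subset corresponding to the first block
  have hsm : StrictMono (fun j : Fin k => Fin.castAdd a j) := Fin.strictMono_castAdd a
  set f : Fin k ↪o Fin (k + a) := OrderEmbedding.ofStrictMono _ hsm with hf
  set S0 : Finset (Fin (k + a)) := Finset.univ.map f.toEmbedding with hS0def
  have hS0 : S0.card = k := by
    rw [hS0def, Finset.card_map, Finset.card_univ, Fintype.card_fin]
  have hemb : f = S0.orderEmbOfFin hS0 := by
    apply Finset.orderEmbOfFin_unique'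
    intro x
    rw [hS0def]
    exact Finset.mem_map_of_mem f.toEmbedding (Finset.mem_univ x)
  have hterm : E'.submatrix (⇑(S0.orderEmbOfFin hS0)) id = F := by
    rw [← hemb]
    ext i j
    show E' (f i) j = F i j
    rw [hE'def]
    show E (finSumFinEquiv.symm (Fin.castAdd a i)) j = F i j
    rw [finSumFinEquiv_symm_apply_castAdd]
    rfl
  have : Complex.normSq ((E'.submatrix (⇑(S0.orderEmbOfFin hS0)) id).det) ≤ gram E' := by
    apply Finset.single_le_sum (f := fun S : {s : Finset (Fin (k+a)) // s.card = k} =>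
      Complex.normSq ((E'.submatrix (⇑(S.1.orderEmbOfFin S.2)) id).det))
      (fun S _ => Complex.normSq_nonneg _) (Finset.mem_univ ⟨S0, hS0⟩)
  rw [hterm] at this
  rw [hgram] at this
  exact this

/-- Sum of the eigenvalues of `Mᴴ M` equals the squared Frobenius norm. -/
theorem sum_eigenvalues_eq_frob (M : Matrix (Fin a) (Fin b) ℂ) :
    ∑ i, (Matrix.isHermitian_conjTranspose_mul_self M).eigenvalues i
      = ∑ i, ∑ j, ‖M i j‖ ^ 2 := by
  classical
  set hH := Matrix.isHermitian_conjTranspose_mul_self M with hhH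
  set lam : Fin b → ℝ := hH.eigenvalues with hlam
  set W : Matrix (Fin b) (Fin b) ℂ := (hH.eigenvectorUnitary : Matrix (Fin b) (Fin b) ℂ) with hW
  have hspec : Mᴴ * M = W * Matrix.diagonal (fun i => (lam i : ℂ)) * Wᴴ := by
    have := hH.spectral_theorem
    rw [← Matrix.star_eq_conjTranspose]
    convert this using 2
    rfl
  have h1 : (Mᴴ * M).trace = ((∑ i, lam i : ℝ) : ℂ) := by
    rw [hspec, Matrix.trace_mul_comm (W * Matrix.diagonal (fun i => (lam i : ℂ))) Wᴴ,
      ← Matrix.mul_assoc, star_mul_unitary hH.eigenvectorUnitary, Matrix.one_mul,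
      Matrix.trace_diagonal]
    push_cast
    rfl
  have h2 : (Mᴴ * M).trace = ((∑ i, ∑ j, Complex.normSq (M i j) : ℝ) : ℂ) := by
    rw [Matrix.trace]
    push_cast
    rw [Finset.sum_comm (γ := Fin a)]
    apply Finset.sum_congr rfl
    intro i _
    rw [Matrix.diag_apply, Matrix.mul_apply]
    apply Finset.sum_congr rfl
    intro j _
    rw [Matrix.conjTranspose_apply]
    rw [show ((Complex.normSq (M j i) : ℝ) : ℂ) = (starRingEnd ℂ) (M j i) * (M j i) from ?_]
    · rfl
    · rw [mul_comm, Complex.mul_conj]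
  have := h1.symm.trans h2
  have hre : (∑ i, lam i) = ∑ i, ∑ j, Complex.normSq (M i j) := by exact_mod_cast this
  rw [hre]
  apply Finset.sum_congr rfl
  intro i _
  apply Finset.sum_congr rfl
  intro j _
  rw [Complex.sq_norm]

end Compression

section Frames

open Matrix

variable {a b c k : ℕ}

theorem submatrix_mul_left {m n p q : ℕ} (X : Matrix (Fin m) (Fin n) ℂ)
    (Y : Matrix (Fin n) (Fin p) ℂ) (f : Fin q → Fin m) :
    X.submatrix f id * Y = (X * Y).submatrix f id := by
  ext i j
  simp [Matrix.mul_apply]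

theorem submatrix_mul_right {m n p q : ℕ} (X : Matrix (Fin m) (Fin n) ℂ)
    (Y : Matrix (Fin n) (Fin p) ℂ) (g : Fin q → Fin p) :
    X * Y.submatrix id g = (X * Y).submatrix id g := by
  ext i j
  simp [Matrix.mul_apply]

theorem submatrix_mul_both {m n p q r : ℕ} (X : Matrix (Fin m) (Fin n) ℂ)
    (Y : Matrix (Fin n) (Fin p) ℂ) (f : Fin q → Fin m) (g : Fin r → Fin p) :
    X.submatrix f id * Y.submatrix id g = (X * Y).submatrix f g := by
  ext i j
  simp [Matrix.mul_apply]

theorem eig_one (n : ℕ) (i : Fin n) :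
    (Matrix.isHermitian_conjTranspose_mul_self (1 : Matrix (Fin n) (Fin n) ℂ)).eigenvalues i = 1 := by
  classical
  set hH := Matrix.isHermitian_conjTranspose_mul_self (1 : Matrix (Fin n) (Fin n) ℂ) with hhH
  have hdiag := hH.conjStarAlgAut_star_eigenvectorUnitary
  rw [Unitary.conjStarAlgAut_star_apply] at hdiag
  have hL : star (hH.eigenvectorUnitary : Matrix (Fin n) (Fin n) ℂ) * ((1 : Matrix (Fin n) (Fin n) ℂ)ᴴ * 1) * (hH.eigenvectorUnitary : Matrix (Fin n) (Fin n) ℂ) = 1 := by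
    have hone : (1 : Matrix (Fin n) (Fin n) ℂ)ᴴ * 1 = 1 := by
      rw [Matrix.conjTranspose_one, Matrix.one_mul]
    have h1 : star (hH.eigenvectorUnitary : Matrix (Fin n) (Fin n) ℂ) * ((1 : Matrix (Fin n) (Fin n) ℂ)ᴴ * 1) * (hH.eigenvectorUnitary : Matrix (Fin n) (Fin n) ℂ)
        = star (hH.eigenvectorUnitary : Matrix (Fin n) (Fin n) ℂ) * (1 : Matrix (Fin n) (Fin n) ℂ) * (hH.eigenvectorUnitary : Matrix (Fin n) (Fin n) ℂ) :=
      congrArg (fun X => star (hH.eigenvectorUnitary : Matrix (Fin n) (Fin n) ℂ) * X * (hH.eigenvectorUnitary : Matrix (Fin n) (Fin n) ℂ)) hone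
    rw [h1, Matrix.mul_one, Matrix.star_eq_conjTranspose]
    exact star_mul_unitary hH.eigenvectorUnitary
  rw [hL] at hdiag
  have h2 := congrFun (congrFun hdiag i) i
  simp only [Matrix.diagonal_apply_eq, Matrix.one_apply_eq, Function.comp_apply] at h2
  have h3 : (1 : ℂ) = ((hH.eigenvalues i : ℝ) : ℂ) := h2
  exact_mod_cast h3.symm

theorem sv2_one_le (n : ℕ) (i : ℕ) : sv2 (1 : Matrix (Fin n) (Fin n) ℂ) i ≤ 1 := by
  unfold sv2
  split
  · unfold dEig
    rw [eig_one]
  · norm_num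

/-- Existence of top-k singular frames with positive singular values. -/
theorem exists_svd_frames (M : Matrix (Fin a) (Fin c) ℂ) (k : ℕ)
    (hpos : ∀ i, i < k → 0 < sv2 M i) :
    ∃ (U : Matrix (Fin a) (Fin k) ℂ) (V : Matrix (Fin c) (Fin k) ℂ),
      Uᴴ * U = 1 ∧ Vᴴ * V = 1 ∧
      Complex.normSq ((Uᴴ * (M * V)).det) = ∏ i ∈ Finset.range k, sv2 M i := by
  classical
  have hkc : k ≤ c := by
    by_contra hck
    push_neg at hck
    have := hpos c hck
    unfold sv2 at this
    rw [dif_neg (lt_irrefl c)] at this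
    exact lt_irrefl 0 this
  set hH := Matrix.isHermitian_conjTranspose_mul_self M with hhH
  set lam : Fin c → ℝ := hH.eigenvalues with hlam
  have hlam0 : ∀ i, 0 ≤ lam i := fun i => Matrix.eigenvalues_conjTranspose_mul_self_nonneg M i
  set W : Matrix (Fin c) (Fin c) ℂ := (hH.eigenvectorUnitary : Matrix (Fin c) (Fin c) ℂ) with hW
  set ι : Fin k → Fin c :=
    fun j => Tuple.sort hH.eigenvalues (Fin.rev (Fin.castLE hkc j)) with hι
  have hι_inj : Function.Injective ι := by
    intro x y hxy
    have h1 := (Tuple.sort hH.eigenvalues).injective hxy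
    have h2 := Fin.rev_injective h1
    exact Fin.castLE_injective hkc h2
  have hι_eig : ∀ j : Fin k, lam (ι j) = sv2 M (j : ℕ) := by
    intro j
    have hjc : (j : ℕ) < c := lt_of_lt_of_le j.2 hkc
    unfold sv2
    rw [dif_pos hjc]
    unfold dEig
    congr 2
  have hlampos : ∀ j : Fin k, 0 < lam (ι j) := by
    intro j
    rw [hι_eig j]
    exact hpos _ j.2
  set V : Matrix (Fin c) (Fin k) ℂ := W.submatrix id ι with hV
  have hWW : Wᴴ * W = 1 := star_mul_unitary hH.eigenvectorUnitary
  have hVV : Vᴴ * V = 1 := by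
    rw [hV, Matrix.conjTranspose_submatrix, submatrix_mul_both, hWW]
    ext i j
    by_cases hij : i = j
    · subst hij
      simp [Matrix.submatrix_apply]
    · simp [Matrix.submatrix_apply, Matrix.one_apply, hι_inj.ne hij, hij]
  have hspecdiag : Wᴴ * (Mᴴ * M) * W = Matrix.diagonal (fun i => (lam i : ℂ)) := by
    have := hH.conjStarAlgAut_star_eigenvectorUnitary
    rw [Unitary.conjStarAlgAut_star_apply] at this
    rw [← Matrix.star_eq_conjTranspose]
    convert this using 2
    all_goals rfl
  have hdiag : Vᴴ * ((Mᴴ * M) * V) = Matrix.diagonal (fun j => (lam (ι j) : ℂ)) := by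
    rw [hV, Matrix.conjTranspose_submatrix, submatrix_mul_right, submatrix_mul_both]
    rw [← Matrix.mul_assoc, hspecdiag]
    ext i j
    by_cases hij : i = j
    · subst hij
      simp [Matrix.submatrix_apply]
    · simp [Matrix.submatrix_apply, Matrix.diagonal_apply, hι_inj.ne hij, hij]
  set sig : Fin k → ℝ := fun j => Real.sqrt (lam (ι j)) with hsig
  have hsigpos : ∀ j, 0 < sig j := fun j => Real.sqrt_pos.2 (hlampos j)
  set Dinv : Matrix (Fin k) (Fin k) ℂ := Matrix.diagonal (fun j => ((sig j)⁻¹ : ℝ)) with hDinv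
  set U : Matrix (Fin a) (Fin k) ℂ := M * V * Dinv with hU
  have hDinvH : Dinvᴴ = Dinv := by
    have hstar2 : (star fun j => (((sig j)⁻¹ : ℝ) : ℂ)) = fun j => (((sig j)⁻¹ : ℝ) : ℂ) := by
      funext j
      simp [Pi.star_apply, Complex.conj_ofReal]
    rw [hDinv, Matrix.diagonal_conjTranspose, hstar2]
  have hUH : Uᴴ = Dinv * (Vᴴ * Mᴴ) := by
    rw [hU, Matrix.conjTranspose_mul, hDinvH, Matrix.conjTranspose_mul]
  have hUMV : Uᴴ * (M * V) = Matrix.diagonal (fun j => (sig j : ℂ)) := by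
    rw [hUH, Matrix.mul_assoc, Matrix.mul_assoc]
    rw [show Mᴴ * (M * V) = (Mᴴ * M) * V from (Matrix.mul_assoc _ _ _).symm]
    rw [hdiag, hDinv, Matrix.diagonal_mul_diagonal]
    have hfun : (fun i => ((((sig i)⁻¹ : ℝ)) : ℂ) * ((lam (ι i) : ℝ) : ℂ))
        = fun j => ((sig j : ℝ) : ℂ) := by
      funext j
      rw [← Complex.ofReal_mul]
      congr 1
      rw [show lam (ι j) = sig j * sig j from (Real.mul_self_sqrt (hlam0 (ι j))).symm]
      field_simp
    exact congrArg Matrix.diagonal hfun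
  have hUU : Uᴴ * U = 1 := by
    rw [hU, show M * V * Dinv = (M * V) * Dinv from rfl, ← Matrix.mul_assoc, hUMV]
    rw [hDinv, Matrix.diagonal_mul_diagonal]
    have hfun1 : (fun i => ((sig i : ℝ) : ℂ) * ((((sig i)⁻¹ : ℝ)) : ℂ)) = fun _ => (1 : ℂ) := by
      funext j
      rw [← Complex.ofReal_mul, mul_inv_cancel₀ (hsigpos j).ne']
      norm_num
    rw [hfun1, Matrix.diagonal_one]
  refine ⟨U, V, hUU, hVV, ?_⟩
  rw [hUMV, Matrix.det_diagonal]
  rw [← Complex.ofReal_prod, Complex.normSq_ofReal]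
  rw [← Finset.prod_mul_distrib]
  rw [← Fin.prod_univ_eq_prod_range (fun i => sv2 M i) k]
  apply Finset.prod_congr rfl
  intro j _
  rw [Real.mul_self_sqrt (hlam0 (ι j)), hι_eig j]

end Frames

section QR

open Matrix

variable {b k : ℕ}

/-- Either the columns of `N` are dependent, or `N` admits a QR-type factorization. -/
theorem exists_qr (N : Matrix (Fin b) (Fin k) ℂ) :
    (∃ cvec : Fin k → ℂ, cvec ≠ 0 ∧ N *ᵥ cvec = 0) ∨
    (∃ Q : Matrix (Fin b) (Fin k) ℂ, Qᴴ * Q = 1 ∧ Q * (Qᴴ * N) = N) := by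
  classical
  haveI hwf : WellFoundedLT (Fin k) := inferInstance
  haveI hlfob : LocallyFiniteOrderBot (Fin k) := inferInstance
  set v : Fin k → EuclideanSpace ℂ (Fin b) := fun j => WithLp.toLp 2 (fun x => N x j) with hv
  by_cases hli : LinearIndependent ℂ v
  · right
    set q : Fin k → EuclideanSpace ℂ (Fin b) := InnerProductSpace.gramSchmidtNormed ℂ v with hq
    have hon : Orthonormal ℂ q := InnerProductSpace.gramSchmidtNormed_orthonormal hli
    have hspan : ∀ j, v j ∈ Submodule.span ℂ (Set.range q) := by
      intro j
      rw [hq, InnerProductSpace.span_gramSchmidtNormed_range, InnerProductSpace.span_gramSchmidt]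
      exact Submodule.subset_span (Set.mem_range_self j)
    set Q : Matrix (Fin b) (Fin k) ℂ := fun x j => q j x with hQ
    have hQQ : Qᴴ * Q = 1 := by
      ext i j
      have h1 : (Qᴴ * Q) i j = ∑ x, (starRingEnd ℂ) (q i x) * (q j x) := by
        rfl
      have h2 : (inner ℂ (q i) (q j) : ℂ) = ∑ x, (starRingEnd ℂ) (q i x) * (q j x) := by
        rw [PiLp.inner_apply]
        exact Finset.sum_congr rfl fun x _ => by rw [RCLike.inner_apply]; ring
      rw [h1, ← h2, orthonormal_iff_ite.1 hon i j, Matrix.one_apply]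
    refine ⟨Q, hQQ, ?_⟩
    have hfix : ∀ u : EuclideanSpace ℂ (Fin b), u ∈ Submodule.span ℂ (Set.range q) →
        Q *ᵥ (Qᴴ *ᵥ (u : Fin b → ℂ)) = (u : Fin b → ℂ) := by
      intro u hu
      induction hu using Submodule.span_induction with
      | mem w hw =>
        obtain ⟨i0, rfl⟩ := hw
        have hstep : Qᴴ *ᵥ (q i0 : Fin b → ℂ) = Pi.single i0 1 := by
          funext i
          have h1 : (Qᴴ *ᵥ (q i0 : Fin b → ℂ)) i = ∑ x, (starRingEnd ℂ) (q i x) * (q i0 x) := by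
            rfl
          have h2 : (inner ℂ (q i) (q i0) : ℂ) = ∑ x, (starRingEnd ℂ) (q i x) * (q i0 x) := by
            rw [PiLp.inner_apply]
            exact Finset.sum_congr rfl fun x _ => by rw [RCLike.inner_apply]; ring
          rw [h1, ← h2, orthonormal_iff_ite.1 hon i i0]
          by_cases hii : i = i0
          · subst hii; simp
          · simp [hii]
        rw [hstep]
        funext x
        rw [Matrix.mulVec_single]
        simp [hQ]
        rfl
      | zero => simp
      | add w₁ w₂ _ _ ih₁ ih₂ =>
        have : ((w₁ + w₂ : EuclideanSpace ℂ (Fin b)) : Fin b → ℂ)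
            = (w₁ : Fin b → ℂ) + (w₂ : Fin b → ℂ) := rfl
        rw [this, Matrix.mulVec_add, Matrix.mulVec_add, ih₁, ih₂]
      | smul a w _ ih =>
        have : ((a • w : EuclideanSpace ℂ (Fin b)) : Fin b → ℂ) = a • (w : Fin b → ℂ) := rfl
        rw [this, Matrix.mulVec_smul, Matrix.mulVec_smul, ih]
    ext x j
    have hcol : (Q * (Qᴴ * N)) x j = (Q *ᵥ (Qᴴ *ᵥ (v j : Fin b → ℂ))) x := by
      rfl
    rw [hcol, hfix (v j) (hspan j)]
  · left
    rw [Fintype.linearIndependent_iff] at hli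
    push_neg at hli
    obtain ⟨cvec, hsum, i0, hi0⟩ := hli
    refine ⟨cvec, ?_, ?_⟩
    · intro hzero
      rw [hzero] at hi0
      exact hi0 rfl
    · funext x
      have hsum' : ∑ j, cvec j • (fun y => N y j : Fin b → ℂ) = (0 : Fin b → ℂ) := by
          simpa [hv] using congrArg WithLp.ofLp hsum
      have h2 := congrFun hsum' x
      rw [Finset.sum_apply] at h2
      simp only [Pi.smul_apply, smul_eq_mul, Pi.zero_apply] at h2
      have h3 : (N *ᵥ cvec) x = ∑ j, cvec j * N x j := by
        simp [Matrix.mulVec, dotProduct, mul_comm]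
      rw [h3]
      exact h2

end QR

section Horn

open Matrix

/-- Horn's inequality for two factors, in terms of prefix products of
squared singular values. -/
theorem horn2 {a b c : ℕ} (P : Matrix (Fin a) (Fin b) ℂ) (Q : Matrix (Fin b) (Fin c) ℂ)
    (k : ℕ) :
    ∏ i ∈ Finset.range k, sv2 (P * Q) i
      ≤ (∏ i ∈ Finset.range k, sv2 P i) * (∏ i ∈ Finset.range k, sv2 Q i) := by
  classical
  by_cases hpos : ∀ i, i < k → 0 < sv2 (P * Q) i
  · obtain ⟨U, V, hUU, hVV, hdet⟩ := exists_svd_frames (P * Q) k hpos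
    set N : Matrix (Fin b) (Fin k) ℂ := Q * V with hN
    have hassoc : Uᴴ * (P * Q * V) = (Uᴴ * P) * N := by
      rw [hN, Matrix.mul_assoc, Matrix.mul_assoc]
    rcases exists_qr N with ⟨cvec, hc0, hNc⟩ | ⟨Q', hQ'Q', hQR⟩
    · exfalso
      have hdet0 : ((Uᴴ * P) * N).det = 0 := by
        rw [← Matrix.exists_mulVec_eq_zero_iff]
        refine ⟨cvec, hc0, ?_⟩
        rw [← Matrix.mulVec_mulVec, hNc, Matrix.mulVec_zero]
      have hprodpos : 0 < ∏ i ∈ Finset.range k, sv2 (P * Q) i := by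
        apply Finset.prod_pos
        intro i hi
        exact hpos i (Finset.mem_range.1 hi)
      rw [← hdet] at hprodpos
      rw [show Uᴴ * (P * Q * V) = (Uᴴ * P) * N from hassoc] at hprodpos
      rw [hdet0] at hprodpos
      simp at hprodpos
    · set R : Matrix (Fin k) (Fin k) ℂ := Q'ᴴ * N with hR
      have hsplit : Uᴴ * (P * Q * V) = (Uᴴ * (P * Q')) * R := by
        rw [hassoc, ← hQR, hR]
        rw [Matrix.mul_assoc, Matrix.mul_assoc, Matrix.mul_assoc]
      have h1 : Complex.normSq ((Uᴴ * (P * Q')).det) ≤ gram (P * Q') :=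
        normSq_det_frame_mul_le U (P * Q') hUU
      have h2 : gram (P * Q') ≤ ∏ i ∈ Finset.range k, sv2 P i :=
        gram_mul_frame_le P Q' hQ'Q'
      have h3 : Complex.normSq R.det = gram N := by
        have hNN : Nᴴ * N = Rᴴ * R := by
          conv_lhs => rw [← hQR]
          rw [Matrix.conjTranspose_mul, Matrix.mul_assoc, ← Matrix.mul_assoc Q'ᴴ Q' _,
            hQ'Q', Matrix.one_mul]
        have e1 := det_conjTranspose_mul_self_eq_gram N
        rw [hNN] at e1
        have e2 : (Rᴴ * R).det = ((Complex.normSq R.det : ℝ) : ℂ) := by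
          rw [Matrix.det_mul, Matrix.det_conjTranspose, Complex.star_def, mul_comm,
            Complex.mul_conj]
        rw [e2] at e1
        exact_mod_cast e1
      have h4 : gram N ≤ ∏ i ∈ Finset.range k, sv2 Q i :=
        gram_mul_frame_le Q V hVV
      calc ∏ i ∈ Finset.range k, sv2 (P * Q) i
          = Complex.normSq ((Uᴴ * (P * Q * V)).det) := by rw [← hdet]
        _ = Complex.normSq (((Uᴴ * (P * Q')) * R).det) := by rw [hsplit]
        _ = Complex.normSq ((Uᴴ * (P * Q')).det) * Complex.normSq R.det := by
            rw [Matrix.det_mul, Complex.normSq_mul]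
        _ ≤ (∏ i ∈ Finset.range k, sv2 P i) * (∏ i ∈ Finset.range k, sv2 Q i) := by
            apply mul_le_mul (h1.trans h2) (h3 ▸ h4) (Complex.normSq_nonneg _)
            exact prod_range_sv2_nonneg P k
  · push_neg at hpos
    obtain ⟨i0, hi0k, h0⟩ := hpos
    have hz : sv2 (P * Q) i0 = 0 := le_antisymm h0 (sv2_nonneg _ _)
    rw [Finset.prod_eq_zero (Finset.mem_range.2 hi0k) hz]
    exact mul_nonneg (prod_range_sv2_nonneg P k) (prod_range_sv2_nonneg Q k)

end Horn

theorem sv2_chainProd_le (d : ℕ → ℕ) (A : ∀ l : ℕ, Matrix (Fin (d (l + 1))) (Fin (d l)) ℂ)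
    (L k : ℕ) :
    ∏ i ∈ Finset.range k, sv2 (chainProd d A L) i
      ≤ ∏ l ∈ Finset.range L, ∏ i ∈ Finset.range k, sv2 (A l) i := by
  induction L with
  | zero =>
    show ∏ i ∈ Finset.range k, sv2 (1 : Matrix (Fin (d 0)) (Fin (d 0)) ℂ) i ≤ 1
    exact Finset.prod_le_one (fun i _ => sv2_nonneg _ i) (fun i _ => sv2_one_le _ i)
  | succ L ih =>
    calc ∏ i ∈ Finset.range k, sv2 (A L * chainProd d A L) i
        ≤ (∏ i ∈ Finset.range k, sv2 (A L) i)
            * ∏ i ∈ Finset.range k, sv2 (chainProd d A L) i := horn2 _ _ k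
      _ ≤ (∏ i ∈ Finset.range k, sv2 (A L) i)
            * ∏ l ∈ Finset.range L, ∏ i ∈ Finset.range k, sv2 (A l) i :=
          mul_le_mul_of_nonneg_left ih (prod_range_sv2_nonneg _ k)
      _ = ∏ l ∈ Finset.range (L + 1), ∏ i ∈ Finset.range k, sv2 (A l) i := by
          rw [Finset.prod_range_succ, mul_comm]

theorem frobNorm_sq_eq {a b : ℕ} (M : Matrix (Fin a) (Fin b) ℂ) :
    frobNorm M ^ 2 = ∑ i, ∑ j, ‖M i j‖ ^ 2 := by
  rw [frobNorm, Real.sq_sqrt]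
  apply Finset.sum_nonneg
  intro i _
  apply Finset.sum_nonneg
  intro j _
  positivity

theorem sum_sv2_le_frob_sq {a b : ℕ} (M : Matrix (Fin a) (Fin b) ℂ) (k : ℕ) :
    ∑ i ∈ Finset.range k, sv2 M i ≤ frobNorm M ^ 2 := by
  have h1 : ∑ i ∈ Finset.range k, sv2 M i ≤ ∑ i ∈ Finset.range (max k b), sv2 M i :=
    Finset.sum_le_sum_of_subset_of_nonneg
      (Finset.range_subset_range.2 (le_max_left _ _)) (fun i _ _ => sv2_nonneg M i)
  have h2 : ∑ i ∈ Finset.range (max k b), sv2 M i = ∑ i ∈ Finset.range b, sv2 M i := by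
    symm
    apply Finset.sum_subset (Finset.range_subset_range.2 (le_max_right _ _))
    intro i _ hib
    rw [Finset.mem_range] at hib
    push_neg at hib
    unfold sv2
    rw [dif_neg (by omega)]
  have h3 : ∑ i ∈ Finset.range b, sv2 M i
      = ∑ i, (Matrix.isHermitian_conjTranspose_mul_self M).eigenvalues i := by
    rw [← Fin.sum_univ_eq_sum_range (fun i => sv2 M i) b]
    rw [← sum_dEig (Matrix.isHermitian_conjTranspose_mul_self M)]
    apply Finset.sum_congr rfl
    intro i _
    unfold sv2
    rw [dif_pos i.2]
  rw [h2, h3, sum_eigenvalues_eq_frob, ← frobNorm_sq_eq] at h1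
  exact h1

end Aux

theorem schatten_le_frobenius_factorization (m n L : ℕ) (hL : 1 ≤ L)
    (B : Matrix (Fin m) (Fin n) ℂ)
    (d : ℕ → ℕ) (A : ∀ l : ℕ, Matrix (Fin (d (l + 1))) (Fin (d l)) ℂ)
    (hdL : d L = m) (hd0 : d 0 = n)
    (hB : chainProd d A L = B.submatrix (Fin.cast hdL) (Fin.cast hd0)) :
    (schattenNorm (2 / (L : ℝ)) B) ^ ((2 : ℝ) / (L : ℝ))
        ≤ (∏ l ∈ Finset.range L, frobNorm (A l) ^ 2) ^ (1 / (L : ℝ))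
    ∧ (∏ l ∈ Finset.range L, frobNorm (A l) ^ 2) ^ (1 / (L : ℝ))
        ≤ (1 / (L : ℝ)) * ∑ l ∈ Finset.range L, frobNorm (A l) ^ 2 := by
  subst hdL
  subst hd0
  have hgen : ∀ (h1 : d L = d L) (h2 : d 0 = d 0),
      B.submatrix (Fin.cast h1) (Fin.cast h2) = B := by
    intro h1 h2
    have e1 : Fin.cast h1 = id := by
      funext x; apply Fin.ext; simp
    have e2 : Fin.cast h2 = id := by
      funext x; apply Fin.ext; simp
    rw [e1, e2, Matrix.submatrix_id_id]
  rw [hgen] at hB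
  subst hB
  have hLR : (0 : ℝ) < (L : ℝ) := by exact_mod_cast hL
  have hinv : (0 : ℝ) < 1 / (L : ℝ) := by positivity
  have hfr2 : ∀ l ∈ Finset.range L, (0:ℝ) ≤ frobNorm (A l) ^ 2 := fun l _ => sq_nonneg _
  constructor
  · -- main inequality
    set p : ℝ := 2 / (L : ℝ) with hp
    have hppos : 0 < p := by positivity
    set hH := Matrix.isHermitian_conjTranspose_mul_self (chainProd d A L) with hhH
    set X : ℝ := ∑ i, Real.sqrt (hH.eigenvalues i) ^ p with hX
    have hXnn : 0 ≤ X :=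
      Finset.sum_nonneg fun i _ => Real.rpow_nonneg (Real.sqrt_nonneg _) _
    have stepA : schattenNorm p (chainProd d A L) ^ p = X := by
      rw [schattenNorm, ← Real.rpow_mul hXnn, one_div, inv_mul_cancel₀ hppos.ne',
        Real.rpow_one]
    have stepB : X = ∑ i ∈ Finset.range (d 0), (sv2 (chainProd d A L) i) ^ (1 / (L:ℝ)) := by
      have hB1 : ∀ i, Real.sqrt (hH.eigenvalues i) ^ p = (hH.eigenvalues i) ^ (1 / (L:ℝ)) := by
        intro i
        rw [Real.sqrt_eq_rpow, ← Real.rpow_mul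
          (Matrix.eigenvalues_conjTranspose_mul_self_nonneg _ i)]
        congr 1
        rw [hp]
        field_simp
      rw [hX]
      rw [Finset.sum_congr rfl fun i _ => hB1 i]
      rw [← Equiv.sum_comp ((Fin.revPerm).trans (Tuple.sort hH.eigenvalues))
        (fun j => hH.eigenvalues j ^ (1 / (L:ℝ)))]
      rw [← Fin.sum_univ_eq_sum_range (fun i => (sv2 (chainProd d A L) i) ^ (1 / (L:ℝ))) (d 0)]
      apply Finset.sum_congr rfl
      intro i _
      have : sv2 (chainProd d A L) (i : ℕ) = dEig hH i := by
        unfold sv2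
        rw [dif_pos i.2]
      rw [this]
      rfl
    have stepC : ∑ i ∈ Finset.range (d 0), (sv2 (chainProd d A L) i) ^ (1 / (L:ℝ))
        ≤ ∑ i ∈ Finset.range (d 0),
            ∏ l ∈ Finset.range L, (sv2 (A l) i) ^ (1 / (L:ℝ)) := by
      apply maj_sum_le (d 0)
      · intro i; exact Real.rpow_nonneg (sv2_nonneg _ i) _
      · intro i; exact Finset.prod_nonneg fun l _ => Real.rpow_nonneg (sv2_nonneg _ i) _
      · intro i j hij
        exact Real.rpow_le_rpow (sv2_nonneg _ j) (sv2_antitone _ i j hij) hinv.le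
      · intro i j hij
        apply Finset.prod_le_prod
        · intro l _; exact Real.rpow_nonneg (sv2_nonneg _ j) _
        · intro l _
          exact Real.rpow_le_rpow (sv2_nonneg _ j) (sv2_antitone _ i j hij) hinv.le
      · intro k hk
        rw [Real.finset_prod_rpow (Finset.range k) _ (fun i _ => sv2_nonneg _ i) (1 / (L:ℝ))]
        have hrhs : ∏ i ∈ Finset.range k, ∏ l ∈ Finset.range L, (sv2 (A l) i) ^ (1 / (L:ℝ))
            = (∏ l ∈ Finset.range L, ∏ i ∈ Finset.range k, sv2 (A l) i) ^ (1 / (L:ℝ)) := by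
          rw [Finset.prod_comm]
          rw [← Real.finset_prod_rpow (Finset.range L) _
            (fun l _ => Finset.prod_nonneg fun i _ => sv2_nonneg _ i) (1 / (L:ℝ))]
          apply Finset.prod_congr rfl
          intro l _
          rw [Real.finset_prod_rpow (Finset.range k) _ (fun i _ => sv2_nonneg _ i) (1 / (L:ℝ))]
        rw [hrhs]
        exact Real.rpow_le_rpow (prod_range_sv2_nonneg _ k)
          (sv2_chainProd_le d A L k) hinv.le
    have stepD : ∑ i ∈ Finset.range (d 0),
          ∏ l ∈ Finset.range L, (sv2 (A l) i) ^ (1 / (L:ℝ))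
        ≤ ∏ l ∈ Finset.range L,
            (∑ i ∈ Finset.range (d 0), sv2 (A l) i) ^ (1 / (L:ℝ)) :=
      holder_prod L (d 0) hL (fun l i => sv2 (A l) i) (fun l i => sv2_nonneg _ i)
    have stepE : ∏ l ∈ Finset.range L,
          (∑ i ∈ Finset.range (d 0), sv2 (A l) i) ^ (1 / (L:ℝ))
        ≤ (∏ l ∈ Finset.range L, frobNorm (A l) ^ 2) ^ (1 / (L:ℝ)) := by
      rw [← Real.finset_prod_rpow (Finset.range L) _ hfr2 (1 / (L:ℝ))]
      apply Finset.prod_le_prod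
      · intro l _
        exact Real.rpow_nonneg (Finset.sum_nonneg fun i _ => sv2_nonneg _ i) _
      · intro l _
        exact Real.rpow_le_rpow (Finset.sum_nonneg fun i _ => sv2_nonneg _ i)
          (sum_sv2_le_frob_sq (A l) (d 0)) hinv.le
    calc schattenNorm p (chainProd d A L) ^ p = X := stepA
      _ = ∑ i ∈ Finset.range (d 0), (sv2 (chainProd d A L) i) ^ (1 / (L:ℝ)) := stepB
      _ ≤ ∑ i ∈ Finset.range (d 0),
            ∏ l ∈ Finset.range L, (sv2 (A l) i) ^ (1 / (L:ℝ)) := stepC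
      _ ≤ ∏ l ∈ Finset.range L,
            (∑ i ∈ Finset.range (d 0), sv2 (A l) i) ^ (1 / (L:ℝ)) := stepD
      _ ≤ (∏ l ∈ Finset.range L, frobNorm (A l) ^ 2) ^ (1 / (L:ℝ)) := stepE
  · -- AM-GM
    rw [← Real.finset_prod_rpow (Finset.range L) _ hfr2 (1 / (L:ℝ))]
    have hw : ∑ _l ∈ Finset.range L, (1 / (L:ℝ)) = 1 := by
      rw [Finset.sum_const, Finset.card_range, nsmul_eq_mul]
      field_simp
    calc ∏ l ∈ Finset.range L, (frobNorm (A l) ^ 2) ^ (1 / (L:ℝ))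
        ≤ ∑ l ∈ Finset.range L, (1 / (L:ℝ)) * (frobNorm (A l) ^ 2) :=
          Real.geom_mean_le_arith_mean_weighted (Finset.range L) _ _
            (fun l _ => hinv.le) hw hfr2
      _ = (1 / (L:ℝ)) * ∑ l ∈ Finset.range L, frobNorm (A l) ^ 2 := by
          rw [Finset.mul_sum]
end

section
/- Let B ∈ M(m×n, ℂ) and let L ≥ 1 be an integer. Write a singular value decomposition B = U S V*, where r = min{m,n}, U and V have orthonormal columns, and S = diag(λ_1, …, λ_r) with λ_i ≥ 0. Then the composable sequence of L matrices A_1 = S^{1/L} V*, A_2 = ⋯ = A_{L−1} = S^{1/L}, A_L = U S^{1/L} satisfies A_L ⋯ A_1 = B and (1/L) Σ_{l=1}^{L} ‖A_l‖_2^2 = ‖S^{1/L}‖_2^2 = (‖B‖^S_{2/L})^{2/L}. In particular, there exists a composable factorization of B into L factors achieving equality in the bound (‖B‖^S_{2/L})^{2/L} ≤ (1/L) Σ_l ‖A_l‖_2^2. -/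
/-!
STATEMENT 8: given an SVD `B = U S Vᴴ`, the composable sequence
`A_1 = S^{1/L} Vᴴ`, `A_2 = ⋯ = A_{L−1} = S^{1/L}`, `A_L = U S^{1/L}` satisfies
`A_L ⋯ A_1 = B` and `(1/L) ∑ ‖A_l‖_2^2 = ‖S^{1/L}‖_2^2 = (‖B‖^S_{2/L})^{2/L}`;
in particular some factorization into `L` factors achieves equality in
`(‖B‖^S_{2/L})^{2/L} ≤ (1/L) ∑ ‖A_l‖_2^2`.
-/

open scoped BigOperators
open Matrix

section Helpers

open Polynomial

lemma eval_prod_msX (M : Multiset ℂ) (x : ℂ) :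
    ((M.map fun a => X - C a).prod).eval x = (M.map fun a => x - a).prod := by
  rw [eval_multiset_prod, Multiset.map_map]
  simp [Function.comp]

lemma smul_one_sub_diagonal (n : ℕ) (x : ℂ) (f : Fin n → ℂ) :
    x • (1 : Matrix (Fin n) (Fin n) ℂ) - diagonal f = diagonal (fun i => x - f i) := by
  ext i j
  by_cases h : i = j <;> simp [h, Matrix.one_apply, diagonal]

lemma det_smul_one_sub (n : ℕ) (H : Matrix (Fin n) (Fin n) ℂ) (hH : H.IsHermitian) (x : ℂ) :
    (x • (1 : Matrix (Fin n) (Fin n) ℂ) - H).det = ∏ i, (x - (hH.eigenvalues i : ℂ)) := by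
  set W : Matrix (Fin n) (Fin n) ℂ := (hH.eigenvectorUnitary : Matrix (Fin n) (Fin n) ℂ)
  have hWW : W * Wᴴ = 1 := by
    simpa [W, star_eq_conjTranspose] using (Matrix.mem_unitaryGroup_iff).mp hH.eigenvectorUnitary.2
  have hWW' : Wᴴ * W = 1 := by
    simpa [W, star_eq_conjTranspose] using (Matrix.mem_unitaryGroup_iff').mp hH.eigenvectorUnitary.2
  have key : x • (1 : Matrix (Fin n) (Fin n) ℂ) - H
      = W * (x • (1 : Matrix (Fin n) (Fin n) ℂ) - diagonal (fun i => (hH.eigenvalues i : ℂ))) * Wᴴ := by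
    rw [Matrix.mul_sub, Matrix.sub_mul]
    congr 1
    · rw [Matrix.mul_smul, Matrix.smul_mul, mul_one, hWW]
    · conv_lhs => rw [hH.spectral_theorem]
      rfl
  rw [key, det_mul, det_mul, mul_comm, ← mul_assoc, ← det_mul, hWW', det_one, one_mul,
    smul_one_sub_diagonal, det_diagonal]

lemma det_smul_one_sub_rect (n r : ℕ) (hr : r ≤ n) (V : Matrix (Fin n) (Fin r) ℂ)
    (hV : Vᴴ * V = 1) (s : Fin r → ℂ) (x : ℂ) (hx : x ≠ 0) :
    (x • (1 : Matrix (Fin n) (Fin n) ℂ) - V * diagonal s * Vᴴ).det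
      = x ^ (n - r) * ∏ k, (x - s k) := by
  have key : x • (1 : Matrix (Fin n) (Fin n) ℂ) - V * diagonal s * Vᴴ
      = x • ((1 : Matrix (Fin n) (Fin n) ℂ) + V * ((-x⁻¹) • (diagonal s * Vᴴ))) := by
    rw [smul_add, Matrix.mul_smul, smul_smul, mul_neg, mul_inv_cancel₀ hx, neg_one_smul,
      ← sub_eq_add_neg, ← Matrix.mul_assoc]
  rw [key, det_smul, det_one_add_mul_comm]
  have : (-x⁻¹) • (diagonal s * Vᴴ) * V = diagonal (fun k => -x⁻¹ * s k) := by
    rw [Matrix.smul_mul, Matrix.mul_assoc, hV, Matrix.mul_one]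
    ext i j
    by_cases h : i = j <;> simp [h, diagonal]
  rw [this]
  have h1 : (1 : Matrix (Fin r) (Fin r) ℂ) + diagonal (fun k => -x⁻¹ * s k)
      = diagonal (fun k => 1 + -x⁻¹ * s k) := by
    rw [← diagonal_one, diagonal_add]
  rw [h1, det_diagonal, Fintype.card_fin]
  have hxp : (x : ℂ) ^ n = x ^ (n - r) * x ^ r := by
    rw [← pow_add]; congr 1; omega
  rw [hxp, mul_assoc]
  congr 1
  have hxr : (x : ℂ) ^ r = ∏ _k : Fin r, x := by simp
  rw [hxr, ← Finset.prod_mul_distrib]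
  refine Finset.prod_congr rfl fun k _ => ?_
  field_simp
  ring

lemma eigen_sum (n r : ℕ) (hr : r ≤ n) (H : Matrix (Fin n) (Fin n) ℂ) (hH : H.IsHermitian)
    (V : Matrix (Fin n) (Fin r) ℂ) (hV : Vᴴ * V = 1) (s : Fin r → ℂ)
    (hHV : H = V * diagonal s * Vᴴ)
    (f : ℂ → ℝ) (hf0 : f 0 = 0) :
    ∑ i, f ((hH.eigenvalues i : ℝ) : ℂ) = ∑ k, f (s k) := by
  set M1 : Multiset ℂ := Finset.univ.val.map (fun i => ((hH.eigenvalues i : ℝ) : ℂ)) with hM1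
  set M2 : Multiset ℂ := Finset.univ.val.map s with hM2
  have hpoly : (M1.map fun a => X - C a).prod = (M2.map fun a => X - C a).prod * X ^ (n - r) := by
    apply eq_of_infinite_eval_eq
    apply ((Set.finite_singleton (0:ℂ)).infinite_compl).mono
    intro x hx
    have hx0 : x ≠ 0 := by simpa using hx
    simp only [Set.mem_setOf_eq]
    rw [eval_prod_msX, eval_mul, eval_prod_msX, eval_pow, eval_X]
    rw [hM1, hM2, Multiset.map_map, Multiset.map_map]
    rw [← Finset.prod_eq_multiset_prod, ← Finset.prod_eq_multiset_prod]
    simp only [Function.comp]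
    rw [← det_smul_one_sub n H hH x, hHV, det_smul_one_sub_rect n r hr V hV s x hx0]
    ring
  have hroots := congrArg Polynomial.roots hpoly
  have hm2 : (Multiset.map (fun a => X - C a) M2).prod ≠ 0 :=
    (monic_multiset_prod_of_monic _ _ (fun a _ => monic_X_sub_C a)).ne_zero
  rw [roots_multiset_prod_X_sub_C, Polynomial.roots_mul (mul_ne_zero hm2 (pow_ne_zero _ X_ne_zero)),
    roots_multiset_prod_X_sub_C, Polynomial.roots_pow, Polynomial.roots_X] at hroots
  have hsum := congrArg (fun M : Multiset ℂ => (M.map f).sum) hroots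
  simp only [Multiset.map_add, Multiset.sum_add] at hsum
  rw [hM1, hM2] at hsum
  simp only [Multiset.map_map, Function.comp] at hsum
  rw [← Finset.sum_eq_multiset_sum, ← Finset.sum_eq_multiset_sum] at hsum
  simpa [Multiset.nsmul_singleton, Multiset.map_replicate, Multiset.sum_replicate, hf0] using hsum

lemma frob_sq_of_factors {N M R : ℕ} (A : Matrix (Fin N) (Fin M) ℂ)
    (P : Matrix (Fin N) (Fin R) ℂ) (Q : Matrix (Fin R) (Fin M) ℂ) (c : Fin R → ℝ)
    (hA : A = P * diagonal (fun k => (c k : ℂ)) * Q)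
    (hP : Pᴴ * P = 1) (hQ : Q * Qᴴ = 1) :
    ∑ i, ∑ j, ‖A i j‖ ^ 2 = ∑ k, (c k) ^ 2 := by
  set D : Matrix (Fin R) (Fin R) ℂ := diagonal (fun k => (c k : ℂ)) with hD
  have hDH : Dᴴ = D := by
    rw [hD]
    ext i j
    rcases eq_or_ne i j with h | h
    · subst h; simp [conjTranspose_apply, diagonal, Complex.conj_ofReal]
    · simp [conjTranspose_apply, diagonal, h, Ne.symm h]
  have t1 : Aᴴ * A = Qᴴ * (D * (D * Q)) := by
    rw [hA, conjTranspose_mul, conjTranspose_mul, hDH]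
    simp only [Matrix.mul_assoc]
    rw [← Matrix.mul_assoc Pᴴ P, hP, Matrix.one_mul]
  have htr : trace (Aᴴ * A) = ∑ k, ((c k : ℂ))^2 := by
    rw [t1, trace_mul_comm, Matrix.mul_assoc, Matrix.mul_assoc, hQ, Matrix.mul_one,
      hD, diagonal_mul_diagonal, trace_diagonal]
    exact Finset.sum_congr rfl fun k _ => (sq ((c k : ℂ))).symm
  have t2 : trace (Aᴴ * A) = ((∑ i, ∑ j, ‖A i j‖^2 : ℝ) : ℂ) := by
    rw [trace]
    simp only [diag_apply, mul_apply, conjTranspose_apply]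
    push_cast
    rw [Finset.sum_comm]
    refine Finset.sum_congr rfl fun i _ => Finset.sum_congr rfl fun j _ => ?_
    rw [Complex.star_def, mul_comm, Complex.mul_conj]
    norm_cast
    rw [Complex.sq_norm]
  have := htr.symm.trans t2
  exact_mod_cast this.symm

lemma orthU {s m r : ℕ} (hs : s = m) (U : Matrix (Fin m) (Fin r) ℂ) (hU : Uᴴ * U = 1)
    (k k' : Fin r) :
    ∑ i : Fin s, star (if h : (i : ℕ) < m then U ⟨(i : ℕ), h⟩ k else 0) *
      (if h : (i : ℕ) < m then U ⟨(i : ℕ), h⟩ k' else 0) = (1 : Matrix (Fin r) (Fin r) ℂ) k k' := by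
  subst hs
  have h2 := congrFun (congrFun hU k) k'
  rw [Matrix.mul_apply] at h2
  simp only [conjTranspose_apply] at h2
  simpa [Fin.is_lt] using h2

lemma orthV {s n r : ℕ} (hs : s = n) (V : Matrix (Fin n) (Fin r) ℂ) (hV : Vᴴ * V = 1)
    (k k' : Fin r) :
    ∑ j : Fin s, (if h : (j : ℕ) < n then star (V ⟨(j : ℕ), h⟩ k) else 0) *
      star (if h : (j : ℕ) < n then star (V ⟨(j : ℕ), h⟩ k') else 0)
      = (1 : Matrix (Fin r) (Fin r) ℂ) k k' := by
  subst hs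
  have h2 := congrFun (congrFun hV k) k'
  rw [Matrix.mul_apply] at h2
  simp only [conjTranspose_apply] at h2
  simpa [Fin.is_lt] using h2

lemma orthId1 {s r : ℕ} (hs : s = r) (k k' : Fin r) :
    ∑ i : Fin s, star (if (i : ℕ) = (k : ℕ) then (1 : ℂ) else 0) *
      (if (i : ℕ) = (k' : ℕ) then (1 : ℂ) else 0) = (1 : Matrix (Fin r) (Fin r) ℂ) k k' := by
  subst hs
  rcases eq_or_ne k k' with h | h
  · subst h; simp [Fin.val_eq_val, Finset.sum_ite_eq']
  · rw [Matrix.one_apply_ne h]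
    refine Finset.sum_eq_zero fun i _ => ?_
    rcases eq_or_ne (i : ℕ) (k : ℕ) with h1 | h1
    · rw [Fin.val_eq_val] at h1
      have h2 : (i : ℕ) ≠ (k' : ℕ) := fun hc =>
        h (h1.symm.trans (Fin.val_injective hc))
      simp only [h1] at h2 ⊢
      simp [h2]
    · simp [h1]

lemma orthId2 {s r : ℕ} (hs : s = r) (k k' : Fin r) :
    ∑ j : Fin s, (if (k : ℕ) = (j : ℕ) then (1 : ℂ) else 0) *
      star (if (k' : ℕ) = (j : ℕ) then (1 : ℂ) else 0) = (1 : Matrix (Fin r) (Fin r) ℂ) k k' := by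
  subst hs
  rcases eq_or_ne k k' with h | h
  · subst h; simp [Fin.val_eq_val, Finset.sum_ite_eq]
  · rw [Matrix.one_apply_ne h]
    refine Finset.sum_eq_zero fun j _ => ?_
    rcases eq_or_ne (k : ℕ) (j : ℕ) with h1 | h1
    · rw [Fin.val_eq_val] at h1
      have h2 : (k' : ℕ) ≠ (j : ℕ) := fun hc =>
        h ((Fin.val_injective hc).trans h1.symm).symm
      simp only [h1] at h2 ⊢
      simp [h2]
    · simp [h1]

lemma collapse {s r : ℕ} (hs : s = r) (a b c1 c2 : Fin r → ℂ) :
    ∑ t : Fin s, (∑ k : Fin r, a k * c1 k * (if (k : ℕ) = (t : ℕ) then 1 else 0)) *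
      (∑ k' : Fin r, (if (t : ℕ) = (k' : ℕ) then 1 else 0) * c2 k' * b k')
      = ∑ k : Fin r, a k * (c1 k * c2 k) * b k := by
  subst hs
  have h1 : ∀ t : Fin s, (∑ k : Fin s, a k * c1 k * (if (k : ℕ) = (t : ℕ) then (1:ℂ) else 0))
      = a t * c1 t := by
    intro t
    simp [Fin.val_eq_val, mul_ite, Finset.sum_ite_eq', mul_one, mul_zero]
  have h2 : ∀ t : Fin s, (∑ k' : Fin s, (if (t : ℕ) = (k' : ℕ) then (1:ℂ) else 0) * c2 k' * b k')
      = c2 t * b t := by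
    intro t
    simp [Fin.val_eq_val, ite_mul, Finset.sum_ite_eq, one_mul, zero_mul]
  simp only [h1, h2]
  exact Finset.sum_congr rfl fun t _ => by ring

lemma frobNorm_sq {m n : ℕ} (X : Matrix (Fin m) (Fin n) ℂ) :
    frobNorm X ^ 2 = ∑ i, ∑ j, ‖X i j‖ ^ 2 :=
  Real.sq_sqrt (by positivity)

end Helpers

/-- The hypotheses `hd`, `hA` describe (entrywise, uniformly in `L ≥ 1`) the composable
sequence whose first factor is `S^{1/L} Vᴴ`, whose middle factors are `S^{1/L}`, and whose
last factor is `U S^{1/L}` (for `L = 1` the single factor is `U S^{1/L} Vᴴ = B`). -/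
theorem svd_factorization_achieves_schatten_bound (m n r L : ℕ) (hL : 1 ≤ L)
    (hrmin : r = min m n)
    (B : Matrix (Fin m) (Fin n) ℂ)
    (U : Matrix (Fin m) (Fin r) ℂ) (V : Matrix (Fin n) (Fin r) ℂ) (σ : Fin r → ℝ)
    (hσ : ∀ i, 0 ≤ σ i) (hU : Uᴴ * U = 1) (hV : Vᴴ * V = 1)
    (hB : B = U * Matrix.diagonal (fun i => (σ i : ℂ)) * Vᴴ)
    (d : ℕ → ℕ) (hd : ∀ k, d k = if k = 0 then n else if L ≤ k then m else r)
    (hd0 : d 0 = n) (hdL : d L = m)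
    (A : ∀ l : ℕ, Matrix (Fin (d (l + 1))) (Fin (d l)) ℂ)
    (hA : ∀ l, l < L → ∀ i j, A l i j =
      ∑ k : Fin r,
        (if L ≤ l + 1 then (if h : (i : ℕ) < m then U ⟨(i : ℕ), h⟩ k else 0)
          else (if (i : ℕ) = (k : ℕ) then 1 else 0))
        * ((σ k ^ (1 / (L : ℝ)) : ℝ) : ℂ)
        * (if l = 0 then (if h : (j : ℕ) < n then star (V ⟨(j : ℕ), h⟩ k) else 0)
          else (if (k : ℕ) = (j : ℕ) then 1 else 0))) :
    chainProd d A L = B.submatrix (Fin.cast hdL) (Fin.cast hd0)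
    ∧ (1 / (L : ℝ)) * ∑ l ∈ Finset.range L, frobNorm (A l) ^ 2
        = frobNorm (Matrix.diagonal (fun k : Fin r => ((σ k ^ (1 / (L : ℝ)) : ℝ) : ℂ))) ^ 2
    ∧ frobNorm (Matrix.diagonal (fun k : Fin r => ((σ k ^ (1 / (L : ℝ)) : ℝ) : ℂ))) ^ 2
        = (schattenNorm (2 / (L : ℝ)) B) ^ ((2 : ℝ) / (L : ℝ))
    ∧ ∃ (d' : ℕ → ℕ) (A' : ∀ l : ℕ, Matrix (Fin (d' (l + 1))) (Fin (d' l)) ℂ)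
        (hdL' : d' L = m) (hd0' : d' 0 = n),
        chainProd d' A' L = B.submatrix (Fin.cast hdL') (Fin.cast hd0') ∧
        (1 / (L : ℝ)) * ∑ l ∈ Finset.range L, frobNorm (A' l) ^ 2
          = (schattenNorm (2 / (L : ℝ)) B) ^ ((2 : ℝ) / (L : ℝ)) := by
  have hLpos : (0 : ℝ) < L := by exact_mod_cast hL
  have hrn : r ≤ n := hrmin ▸ min_le_right m n
  have hrm : r ≤ m := hrmin ▸ min_le_left m n
  have hcpos : (0 : ℝ) < 1 / (L : ℝ) := by positivity
  -- Part 1: entrywise formula for partial products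
  have key : ∀ l, 1 ≤ l → l ≤ L → ∀ (i : Fin (d l)) (j : Fin (d 0)),
      chainProd d A l i j = ∑ k : Fin r,
        (if L ≤ l then (if h : (i : ℕ) < m then U ⟨(i : ℕ), h⟩ k else 0)
          else (if (i : ℕ) = (k : ℕ) then 1 else 0))
        * ((σ k ^ ((l : ℝ) * (1 / (L : ℝ))) : ℝ) : ℂ)
        * (if h : (j : ℕ) < n then star (V ⟨(j : ℕ), h⟩ k) else 0) := by
    refine Nat.le_induction ?_ ?_
    · intro h1L i j
      have e0 : chainProd d A 1 i j = A 0 i j := by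
        show (A 0 * chainProd d A 0) i j = A 0 i j
        rw [show chainProd d A 0 = (1 : Matrix (Fin (d 0)) (Fin (d 0)) ℂ) from rfl,
          Matrix.mul_one]
      rw [e0, hA 0 (by omega)]
      refine Finset.sum_congr rfl fun k _ => ?_
      norm_num
    · intro l hl IH hlL i j
      have hlL' : l ≤ L := by omega
      have hlltL : l < L := by omega
      have hdl : d l = r := by
        rw [hd l]
        have h1 : ¬ l = 0 := by omega
        have h2 : ¬ L ≤ l := by omega
        simp [h1, h2]
      have e1 : chainProd d A (l + 1) i j = ∑ t : Fin (d l), A l i t * chainProd d A l t j := by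
        show (A l * chainProd d A l) i j = _
        rw [Matrix.mul_apply]
      rw [e1]
      have e2 : ∀ t : Fin (d l), A l i t = ∑ k : Fin r,
          (if L ≤ l + 1 then (if h : (i : ℕ) < m then U ⟨(i : ℕ), h⟩ k else 0)
            else (if (i : ℕ) = (k : ℕ) then 1 else 0))
          * ((σ k ^ (1 / (L : ℝ)) : ℝ) : ℂ)
          * (if (k : ℕ) = (t : ℕ) then 1 else 0) := by
        intro t
        rw [hA l hlltL]
        refine Finset.sum_congr rfl fun k _ => ?_
        have h1 : ¬ l = 0 := by omega
        simp [h1]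
      have e3 : ∀ t : Fin (d l), chainProd d A l t j = ∑ k' : Fin r,
          (if (t : ℕ) = (k' : ℕ) then 1 else 0)
          * ((σ k' ^ ((l : ℝ) * (1 / (L : ℝ))) : ℝ) : ℂ)
          * (if h : (j : ℕ) < n then star (V ⟨(j : ℕ), h⟩ k') else 0) := by
        intro t
        rw [IH hlL' t j]
        refine Finset.sum_congr rfl fun k' _ => ?_
        have h2 : ¬ L ≤ l := by omega
        simp [h2]
      simp only [e2, e3]
      rw [collapse hdl
        (fun k => (if L ≤ l + 1 then (if h : (i : ℕ) < m then U ⟨(i : ℕ), h⟩ k else 0)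
            else (if (i : ℕ) = (k : ℕ) then 1 else 0)))
        (fun k => (if h : (j : ℕ) < n then star (V ⟨(j : ℕ), h⟩ k) else 0))
        (fun k => ((σ k ^ (1 / (L : ℝ)) : ℝ) : ℂ))
        (fun k => ((σ k ^ ((l : ℝ) * (1 / (L : ℝ))) : ℝ) : ℂ))]
      refine Finset.sum_congr rfl fun k _ => ?_
      congr 2
      rw [← Complex.ofReal_mul]
      congr 1
      have harg : ((l + 1 : ℕ) : ℝ) * (1 / (L : ℝ))
          = 1 / (L : ℝ) + (l : ℝ) * (1 / (L : ℝ)) := by push_cast; ring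
      rw [harg, Real.rpow_add' (hσ k) (by positivity)]
  -- Part 1 conclusion
  have part1 : chainProd d A L = B.submatrix (Fin.cast hdL) (Fin.cast hd0) := by
    ext i j
    rw [key L hL le_rfl i j, submatrix_apply, hB]
    have him : (i : ℕ) < m := hdL ▸ i.isLt
    have hjn : (j : ℕ) < n := hd0 ▸ j.isLt
    have hBij : (U * diagonal (fun i => (σ i : ℂ)) * Vᴴ) (Fin.cast hdL i) (Fin.cast hd0 j)
        = ∑ k, U (Fin.cast hdL i) k * (σ k : ℂ) * star (V (Fin.cast hd0 j) k) := by
      rw [Matrix.mul_apply]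
      refine Finset.sum_congr rfl fun k _ => ?_
      rw [Matrix.mul_diagonal, conjTranspose_apply]
    rw [hBij]
    refine Finset.sum_congr rfl fun k _ => ?_
    rw [if_pos (le_refl L), dif_pos him, dif_pos hjn]
    have h1 : ((L : ℕ) : ℝ) * (1 / (L : ℝ)) = 1 := by field_simp
    rw [h1, Real.rpow_one]
    rfl
  -- Frobenius norms of the factors
  have hterm : ∀ l, l < L → frobNorm (A l) ^ 2 = ∑ k, (σ k ^ (1 / (L : ℝ))) ^ 2 := by
    intro l hlL
    rw [frobNorm_sq]
    refine frob_sq_of_factors (A l)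
      (Matrix.of fun i k => if L ≤ l + 1 then (if h : (i : ℕ) < m then U ⟨(i : ℕ), h⟩ k else 0)
        else (if (i : ℕ) = (k : ℕ) then 1 else 0))
      (Matrix.of fun k j => if l = 0 then (if h : (j : ℕ) < n then star (V ⟨(j : ℕ), h⟩ k) else 0)
        else (if (k : ℕ) = (j : ℕ) then 1 else 0))
      (fun k => σ k ^ (1 / (L : ℝ))) ?_ ?_ ?_
    · ext i j
      rw [hA l hlL, Matrix.mul_apply]
      refine Finset.sum_congr rfl fun k _ => ?_
      rw [Matrix.mul_diagonal]
      rfl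
    · ext k k'
      rw [Matrix.mul_apply]
      simp only [conjTranspose_apply, Matrix.of_apply]
      by_cases hcase : L ≤ l + 1
      · have hdl1 : d (l + 1) = m := by
          rw [hd]
          have : ¬ l + 1 = 0 := by omega
          simp [this, hcase]
        simp only [if_pos hcase]
        exact orthU hdl1 U hU k k'
      · have hdl1 : d (l + 1) = r := by
          rw [hd]
          have : ¬ l + 1 = 0 := by omega
          simp [this, hcase]
        simp only [if_neg hcase]
        exact orthId1 hdl1 k k'
    · ext k k'
      rw [Matrix.mul_apply]
      simp only [conjTranspose_apply, Matrix.of_apply]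
      by_cases hcase : l = 0
      · simp only [if_pos hcase]
        exact orthV (hcase ▸ hd0) V hV k k'
      · have hdl : d l = r := by
          rw [hd]
          have h2 : ¬ L ≤ l := by omega
          simp [hcase, h2]
        simp only [if_neg hcase]
        exact orthId2 hdl k k'
  -- Frobenius norm of the diagonal matrix
  have hdiag : frobNorm (Matrix.diagonal (fun k : Fin r => ((σ k ^ (1 / (L : ℝ)) : ℝ) : ℂ))) ^ 2
      = ∑ k, (σ k ^ (1 / (L : ℝ))) ^ 2 := by
    rw [frobNorm_sq]
    refine Finset.sum_congr rfl fun i _ => ?_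
    rw [Finset.sum_eq_single i]
    · simp [diagonal, Complex.norm_real,
        abs_of_nonneg (Real.rpow_nonneg (hσ i) (1 / (L : ℝ)))]
    · intro b _ hbi
      simp [Matrix.diagonal_apply_ne _ (Ne.symm hbi)]
    · simp
  have part2 : (1 / (L : ℝ)) * ∑ l ∈ Finset.range L, frobNorm (A l) ^ 2
      = frobNorm (Matrix.diagonal (fun k : Fin r => ((σ k ^ (1 / (L : ℝ)) : ℝ) : ℂ))) ^ 2 := by
    rw [hdiag, Finset.sum_congr rfl (fun l hl => hterm l (Finset.mem_range.mp hl)),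
      Finset.sum_const, Finset.card_range, nsmul_eq_mul]
    field_simp
  -- Part 3
  have part3 : frobNorm (Matrix.diagonal (fun k : Fin r => ((σ k ^ (1 / (L : ℝ)) : ℝ) : ℂ))) ^ 2
      = (schattenNorm (2 / (L : ℝ)) B) ^ ((2 : ℝ) / (L : ℝ)) := by
    rw [hdiag]
    have hppos : (0 : ℝ) < 2 / (L : ℝ) := by positivity
    have hHeq : Bᴴ * B = V * diagonal (fun k => ((σ k ^ 2 : ℝ) : ℂ)) * Vᴴ := by
      rw [hB, conjTranspose_mul, conjTranspose_mul, conjTranspose_conjTranspose]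
      simp only [Matrix.mul_assoc]
      rw [← Matrix.mul_assoc Uᴴ U, hU, Matrix.one_mul]
      have hDH : (diagonal fun i => (σ i : ℂ))ᴴ = diagonal fun i => (σ i : ℂ) := by
        ext i j
        rcases eq_or_ne i j with h | h
        · subst h; simp [conjTranspose_apply, diagonal, Complex.conj_ofReal]
        · simp [conjTranspose_apply, diagonal, h, Ne.symm h]
      rw [hDH]
      congr 1
      rw [← Matrix.mul_assoc, diagonal_mul_diagonal]
      have harg : (fun i => (σ i : ℂ) * σ i) = fun k => ((σ k ^ 2 : ℝ) : ℂ) := by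
        funext k
        push_cast
        ring
      rw [harg]
    have hsum := eigen_sum n r hrn (Bᴴ * B) (Matrix.isHermitian_conjTranspose_mul_self B)
      V hV (fun k => ((σ k ^ 2 : ℝ) : ℂ)) hHeq
      (fun z => Real.sqrt z.re ^ (2 / (L : ℝ)))
      (by simp [Real.zero_rpow hppos.ne'])
    simp only [Complex.ofReal_re] at hsum
    simp only [schattenNorm]
    rw [hsum]
    have hs2 : ∀ k, Real.sqrt (σ k ^ 2) = σ k := fun k => Real.sqrt_sq (hσ k)
    simp only [hs2]
    have hS : (0 : ℝ) ≤ ∑ k, σ k ^ (2 / (L : ℝ)) :=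
      Finset.sum_nonneg fun k _ => Real.rpow_nonneg (hσ k) _
    rw [← Real.rpow_mul hS, one_div_mul_cancel hppos.ne', Real.rpow_one]
    refine Finset.sum_congr rfl fun k _ => ?_
    rw [← Real.rpow_natCast (σ k ^ (1 / (L : ℝ))) 2, ← Real.rpow_mul (hσ k)]
    congr 1
    push_cast
    ring
  exact ⟨part1, part2, part3, d, A, hdL, hd0, part1, part2.trans part3⟩
end

section
/- Let Φ : ℝ^n → ℝ_{≥0} be a symmetric gauge function, i.e. a norm on ℝ^n that is invariant under coordinate permutations and under sign changes of coordinates. Let p_1, p_2, r > 0 satisfy 1/p_1 + 1/p_2 = 1/r. Then for all x, y ∈ ℝ^n, Φ(|x·y|^r)^{1/r} ≤ Φ(|x|^{p_1})^{1/p_1} · Φ(|y|^{p_2})^{1/p_2}, where x·y denotes the coordinatewise product, |z| denotes the coordinatewise absolute value, and z^t denotes the coordinatewise t-th power of a vector z with nonnegative coordinates. -/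
/-!
STATEMENT 10: generalized Hölder inequality for symmetric gauge functions:
if `1/p₁ + 1/p₂ = 1/r`, then `Φ(|x·y|^r)^{1/r} ≤ Φ(|x|^{p₁})^{1/p₁} Φ(|y|^{p₂})^{1/p₂}`.
-/

open scoped BigOperators

section Aux

variable {n : ℕ} {Φ : (Fin n → ℝ) → ℝ}

lemma sgf_zero (hsmul : ∀ (c : ℝ) x, Φ (c • x) = |c| * Φ x) : Φ 0 = 0 := by
  have := hsmul 0 0
  simpa using this

lemma sgf_nonneg (hsmul : ∀ (c : ℝ) x, Φ (c • x) = |c| * Φ x)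
    (htriangle : ∀ x y, Φ (x + y) ≤ Φ x + Φ y) (z : Fin n → ℝ) : 0 ≤ Φ z := by
  have h0 : Φ 0 = 0 := sgf_zero hsmul
  have hneg : Φ (-z) = Φ z := by
    have := hsmul (-1) z
    simpa using this
  have h := htriangle z (-z)
  rw [add_neg_cancel, h0, hneg] at h
  linarith

lemma sgf_step (hsmul : ∀ (c : ℝ) x, Φ (c • x) = |c| * Φ x)
    (htriangle : ∀ x y, Φ (x + y) ≤ Φ x + Φ y)
    (hsign : ∀ ε : Fin n → ℝ, (∀ i, ε i = 1 ∨ ε i = -1) → ∀ x,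
      Φ (fun i => ε i * x i) = Φ x)
    (u v : Fin n → ℝ) (i : Fin n)
    (hj : ∀ j, j ≠ i → u j = v j) (h0 : 0 ≤ u i) (h1 : u i ≤ v i) : Φ u ≤ Φ v := by
  have hvi : 0 ≤ v i := le_trans h0 h1
  rcases eq_or_lt_of_le hvi with hv0 | hv0
  · have huv : u = v := by
      funext j
      by_cases hji : j = i
      · subst hji; linarith
      · exact hj j hji
    rw [huv]
  · obtain ⟨t, ht0, ht1, htv⟩ : ∃ t : ℝ, 0 ≤ t ∧ t ≤ 1 ∧ t * v i = u i := by
      refine ⟨u i / v i, div_nonneg h0 hvi, by rw [div_le_one hv0]; exact h1, by field_simp⟩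
    set ε : Fin n → ℝ := fun j => if j = i then (-1 : ℝ) else 1 with hε
    have hεs : ∀ j, ε j = 1 ∨ ε j = -1 := by
      intro j; by_cases hji : j = i <;> simp [hε, hji]
    have hu : u = ((1 + t) / 2) • v + ((1 - t) / 2) • (fun j => ε j * v j) := by
      funext j
      by_cases hji : j = i
      · subst hji
        simp only [Pi.add_apply, Pi.smul_apply, smul_eq_mul, hε, eq_self_iff_true, if_true]
        linear_combination -htv
      · simp only [Pi.add_apply, Pi.smul_apply, smul_eq_mul, hε, if_neg hji, hj j hji]
        ring
    calc Φ u ≤ Φ (((1 + t) / 2) • v) + Φ (((1 - t) / 2) • (fun j => ε j * v j)) := by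
          rw [hu]; exact htriangle _ _
      _ = ((1 + t) / 2) * Φ v + ((1 - t) / 2) * Φ v := by
          rw [hsmul, hsmul, hsign ε hεs v, abs_of_nonneg (by linarith : (0:ℝ) ≤ (1 + t) / 2),
            abs_of_nonneg (by linarith : (0:ℝ) ≤ (1 - t) / 2)]
      _ = Φ v := by ring

lemma sgf_mono (hsmul : ∀ (c : ℝ) x, Φ (c • x) = |c| * Φ x)
    (htriangle : ∀ x y, Φ (x + y) ≤ Φ x + Φ y)
    (hsign : ∀ ε : Fin n → ℝ, (∀ i, ε i = 1 ∨ ε i = -1) → ∀ x,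
      Φ (fun i => ε i * x i) = Φ x)
    (u v : Fin n → ℝ) (h0 : ∀ i, 0 ≤ u i) (h1 : ∀ i, u i ≤ v i) : Φ u ≤ Φ v := by
  classical
  have key : ∀ s : Finset (Fin n), Φ u ≤ Φ (fun j => if j ∈ s then v j else u j) := by
    intro s
    refine Finset.induction_on s ?_ ?_
    · simp
    · intro a s ha ih
      refine le_trans ih (sgf_step hsmul htriangle hsign _ _ a ?_ ?_ ?_)
      · intro j hja
        simp [Finset.mem_insert, hja]
      · rw [if_neg ha]
        exact h0 a
      · rw [if_neg ha, if_pos (Finset.mem_insert_self a s)]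
        exact h1 a
  have h2 : (fun j => if j ∈ Finset.univ then v j else u j) = v := by
    funext j; simp
  have := key Finset.univ
  rwa [h2] at this

end Aux

theorem symmetric_gauge_holder (n : ℕ) (Φ : (Fin n → ℝ) → ℝ)
    -- Φ is a norm on ℝ^n …
    (hzero : ∀ x, Φ x = 0 ↔ x = 0)
    (hsmul : ∀ (c : ℝ) x, Φ (c • x) = |c| * Φ x)
    (htriangle : ∀ x y, Φ (x + y) ≤ Φ x + Φ y)
    -- … invariant under coordinate permutations and sign changes (symmetric gauge function)
    (hperm : ∀ (σ : Equiv.Perm (Fin n)) x, Φ (x ∘ σ) = Φ x)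
    (hsign : ∀ ε : Fin n → ℝ, (∀ i, ε i = 1 ∨ ε i = -1) → ∀ x,
      Φ (fun i => ε i * x i) = Φ x)
    (p₁ p₂ r : ℝ) (hp₁ : 0 < p₁) (hp₂ : 0 < p₂) (hr : 0 < r)
    (hpr : 1 / p₁ + 1 / p₂ = 1 / r)
    (x y : Fin n → ℝ) :
    Φ (fun i => |x i * y i| ^ r) ^ (1 / r)
      ≤ Φ (fun i => |x i| ^ p₁) ^ (1 / p₁) * Φ (fun i => |y i| ^ p₂) ^ (1 / p₂) := by
  have hθ : r / p₁ + r / p₂ = 1 := by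
    field_simp at hpr ⊢
    nlinarith [hpr]
  have hθ1 : 0 ≤ r / p₁ := le_of_lt (div_pos hr hp₁)
  have hθ2 : 0 ≤ r / p₂ := le_of_lt (div_pos hr hp₂)
  -- key lemma: unnormalized Hölder via weighted AM-GM and monotonicity
  have key : ∀ x y : Fin n → ℝ,
      Φ (fun i => |x i * y i| ^ r)
        ≤ r / p₁ * Φ (fun i => |x i| ^ p₁) + r / p₂ * Φ (fun i => |y i| ^ p₂) := by
    intro x y
    set a : Fin n → ℝ := fun i => |x i| ^ p₁ with ha
    set b : Fin n → ℝ := fun i => |y i| ^ p₂ with hb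
    have hpt : ∀ i, |x i * y i| ^ r ≤ r / p₁ * a i + r / p₂ * b i := by
      intro i
      have hxr : |x i| ^ r = (a i) ^ (r / p₁) := by
        rw [ha, ← Real.rpow_mul (abs_nonneg _), mul_div_cancel₀ _ (ne_of_gt hp₁)]
      have hyr : |y i| ^ r = (b i) ^ (r / p₂) := by
        rw [hb, ← Real.rpow_mul (abs_nonneg _), mul_div_cancel₀ _ (ne_of_gt hp₂)]
      calc |x i * y i| ^ r = (a i) ^ (r / p₁) * (b i) ^ (r / p₂) := by
            rw [abs_mul, Real.mul_rpow (abs_nonneg _) (abs_nonneg _), hxr, hyr]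
        _ ≤ r / p₁ * a i + r / p₂ * b i :=
            Real.geom_mean_le_arith_mean2_weighted hθ1 hθ2
              (Real.rpow_nonneg (abs_nonneg _) _) (Real.rpow_nonneg (abs_nonneg _) _) hθ
    have hmono : Φ (fun i => |x i * y i| ^ r)
        ≤ Φ ((r / p₁) • a + (r / p₂) • b) := by
      refine sgf_mono hsmul htriangle hsign _ _ (fun i => Real.rpow_nonneg (abs_nonneg _) _) ?_
      intro i
      simpa using hpt i
    refine le_trans hmono ?_
    refine le_trans (htriangle _ _) ?_
    rw [hsmul, hsmul, abs_of_nonneg hθ1, abs_of_nonneg hθ2]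
  -- now normalize
  set a : Fin n → ℝ := fun i => |x i| ^ p₁ with ha
  set b : Fin n → ℝ := fun i => |y i| ^ p₂ with hb
  set A := Φ a with hA
  set B := Φ b with hB
  have hA0 : 0 ≤ A := sgf_nonneg hsmul htriangle a
  have hB0 : 0 ≤ B := sgf_nonneg hsmul htriangle b
  by_cases hAz : A = 0
  · have hx0 : ∀ i, x i = 0 := by
      intro i
      have := congrFun ((hzero a).mp hAz) i
      simp only [ha, Pi.zero_apply] at this
      have habs : |x i| = 0 := by
        by_contra h
        have hpos : 0 < |x i| := lt_of_le_of_ne (abs_nonneg _) (Ne.symm h)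
        exact absurd this (ne_of_gt (Real.rpow_pos_of_pos hpos _))
      exact abs_eq_zero.mp habs
    have hL : Φ (fun i => |x i * y i| ^ r) = 0 := by
      have : (fun i => |x i * y i| ^ r) = (0 : Fin n → ℝ) := by
        funext i
        simp [hx0 i, Real.zero_rpow (ne_of_gt hr)]
      rw [this]; exact (hzero 0).mpr rfl
    rw [hL, Real.zero_rpow (by positivity : (1:ℝ)/r ≠ 0), hAz,
      Real.zero_rpow (by positivity : (1:ℝ)/p₁ ≠ 0), zero_mul]
  by_cases hBz : B = 0
  · have hy0 : ∀ i, y i = 0 := by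
      intro i
      have := congrFun ((hzero b).mp hBz) i
      simp only [hb, Pi.zero_apply] at this
      have habs : |y i| = 0 := by
        by_contra h
        have hpos : 0 < |y i| := lt_of_le_of_ne (abs_nonneg _) (Ne.symm h)
        exact absurd this (ne_of_gt (Real.rpow_pos_of_pos hpos _))
      exact abs_eq_zero.mp habs
    have hL : Φ (fun i => |x i * y i| ^ r) = 0 := by
      have : (fun i => |x i * y i| ^ r) = (0 : Fin n → ℝ) := by
        funext i
        simp [hy0 i, Real.zero_rpow (ne_of_gt hr)]
      rw [this]; exact (hzero 0).mpr rfl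
    rw [hL, Real.zero_rpow (by positivity : (1:ℝ)/r ≠ 0), hBz,
      Real.zero_rpow (by positivity : (1:ℝ)/p₂ ≠ 0), mul_zero]
  have hApos : 0 < A := lt_of_le_of_ne hA0 (Ne.symm hAz)
  have hBpos : 0 < B := lt_of_le_of_ne hB0 (Ne.symm hBz)
  -- normalized vectors
  set cA : ℝ := A ^ (-(1 / p₁)) with hcA
  set cB : ℝ := B ^ (-(1 / p₂)) with hcB
  have hcApos : 0 < cA := Real.rpow_pos_of_pos hApos _
  have hcBpos : 0 < cB := Real.rpow_pos_of_pos hBpos _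
  have hΦx' : Φ (fun i => |cA * x i| ^ p₁) = 1 := by
    have heq : (fun i => |cA * x i| ^ p₁) = (A⁻¹) • a := by
      funext i
      simp only [Pi.smul_apply, smul_eq_mul, ha]
      rw [abs_mul, abs_of_pos hcApos, Real.mul_rpow (le_of_lt hcApos) (abs_nonneg _), hcA,
        ← Real.rpow_mul (le_of_lt hApos)]
      congr 1
      rw [show -(1 / p₁) * p₁ = (-1 : ℝ) by field_simp, Real.rpow_neg_one]
    rw [heq, hsmul, abs_of_pos (inv_pos.mpr hApos), ← hA, inv_mul_cancel₀ (ne_of_gt hApos)]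
  have hΦy' : Φ (fun i => |cB * y i| ^ p₂) = 1 := by
    have heq : (fun i => |cB * y i| ^ p₂) = (B⁻¹) • b := by
      funext i
      simp only [Pi.smul_apply, smul_eq_mul, hb]
      rw [abs_mul, abs_of_pos hcBpos, Real.mul_rpow (le_of_lt hcBpos) (abs_nonneg _), hcB,
        ← Real.rpow_mul (le_of_lt hBpos)]
      congr 1
      rw [show -(1 / p₂) * p₂ = (-1 : ℝ) by field_simp, Real.rpow_neg_one]
    rw [heq, hsmul, abs_of_pos (inv_pos.mpr hBpos), ← hB, inv_mul_cancel₀ (ne_of_gt hBpos)]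
  have hkey := key (fun i => cA * x i) (fun i => cB * y i)
  rw [hΦx', hΦy', mul_one, mul_one, hθ] at hkey
  -- rewrite the LHS of hkey
  have hLHS : (fun i => |cA * x i * (cB * y i)| ^ r)
      = ((cA * cB) ^ r) • (fun i => |x i * y i| ^ r) := by
    funext i
    simp only [Pi.smul_apply, smul_eq_mul]
    rw [show cA * x i * (cB * y i) = (cA * cB) * (x i * y i) by ring, abs_mul,
      abs_of_pos (mul_pos hcApos hcBpos),
      Real.mul_rpow (le_of_lt (mul_pos hcApos hcBpos)) (abs_nonneg _)]
  rw [hLHS, hsmul, abs_of_pos (Real.rpow_pos_of_pos (mul_pos hcApos hcBpos) r)] at hkey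
  -- conclude: Φ(|xy|^r) ≤ (A^{1/p₁} B^{1/p₂})^r
  set D : ℝ := A ^ (1 / p₁) * B ^ (1 / p₂) with hD
  have hDpos : 0 < D := mul_pos (Real.rpow_pos_of_pos hApos _) (Real.rpow_pos_of_pos hBpos _)
  have hCD : (cA * cB) * D = 1 := by
    rw [hcA, hcB, hD]
    rw [show A ^ (-(1 / p₁)) * B ^ (-(1 / p₂)) * (A ^ (1 / p₁) * B ^ (1 / p₂))
        = (A ^ (-(1 / p₁)) * A ^ (1 / p₁)) * (B ^ (-(1 / p₂)) * B ^ (1 / p₂)) by ring,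
      ← Real.rpow_add hApos, ← Real.rpow_add hBpos, neg_add_cancel, neg_add_cancel,
      Real.rpow_zero, Real.rpow_zero, mul_one]
  have hCDr : (cA * cB) ^ r * D ^ r = 1 := by
    rw [← Real.mul_rpow (le_of_lt (mul_pos hcApos hcBpos)) (le_of_lt hDpos), hCD,
      Real.one_rpow]
  have hDr : 0 < D ^ r := Real.rpow_pos_of_pos hDpos r
  have hbound : Φ (fun i => |x i * y i| ^ r) ≤ D ^ r := by
    nlinarith [hkey, hCDr, hDr, Real.rpow_pos_of_pos (mul_pos hcApos hcBpos) r]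
  calc Φ (fun i => |x i * y i| ^ r) ^ (1 / r)
      ≤ (D ^ r) ^ (1 / r) :=
        Real.rpow_le_rpow (sgf_nonneg hsmul htriangle _) hbound (by positivity)
    _ = D := by
        rw [← Real.rpow_mul (le_of_lt hDpos), mul_one_div_cancel (ne_of_gt hr), Real.rpow_one]
end

section
/- Fix n ∈ ℕ and let N be a unitarily invariant norm on M(n×n, ℂ), i.e. N(UAV) = N(A) for all A and all unitary U, V ∈ U(n). Define Φ : ℝ^n → ℝ_{≥0} by Φ(x) = N(diag(x)). Then: (i) Φ is a symmetric gauge function, i.e. a norm on ℝ^n invariant under coordinate permutations and sign changes of coordinates; and (ii) for every A ∈ M(n×n, ℂ), N(A) = Φ(s(A)), where s(A) ∈ ℝ^n is the vector of singular values of A (the nonnegative square roots of the eigenvalues of AᴴA, listed with multiplicity). Consequently N is determined by a symmetric gauge function evaluated on singular values. -/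
/-!
STATEMENT 11: every unitarily invariant norm `N` on `M(n×n, ℂ)` arises from a symmetric
gauge function: `Φ(x) := N(diag x)` is a symmetric gauge function and
`N(A) = Φ(s(A))` where `s(A)` is the vector of singular values of `A`.
-/

open scoped BigOperators
open Matrix

/-- The vector of singular values of a square complex matrix: the nonnegative square
roots of the eigenvalues of `AᴴA`, listed with multiplicity. -/
noncomputable def singVals {n : ℕ} (A : Matrix (Fin n) (Fin n) ℂ) : Fin n → ℝ :=
  fun i => Real.sqrt ((Matrix.isHermitian_conjTranspose_mul_self A).eigenvalues i)
open scoped ComplexOrder in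
private lemma exists_svd' {n : ℕ} (A : Matrix (Fin n) (Fin n) ℂ) :
    ∃ U V : Matrix (Fin n) (Fin n) ℂ, U ∈ Matrix.unitaryGroup (Fin n) ℂ ∧
      V ∈ Matrix.unitaryGroup (Fin n) ℂ ∧
      A = U * Matrix.diagonal (fun i => ((singVals A i : ℝ) : ℂ)) * V := by
  unfold singVals
  set hH := Matrix.isHermitian_conjTranspose_mul_self A with hhH
  set W : Matrix (Fin n) (Fin n) ℂ := (hH.eigenvectorUnitary : Matrix (Fin n) (Fin n) ℂ) with hW
  have hWmem : W ∈ Matrix.unitaryGroup (Fin n) ℂ := hH.eigenvectorUnitary.2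
  set lam : Fin n → ℝ := hH.eigenvalues with hlam
  set s : Fin n → ℝ := fun i => Real.sqrt (lam i) with hsdef
  have hlamnn : ∀ i, 0 ≤ lam i :=
    fun i => (Matrix.posSemidef_conjTranspose_mul_self A).eigenvalues_nonneg i
  have hssq : ∀ i, s i ^ 2 = lam i := fun i => Real.sq_sqrt (hlamnn i)
  set B : Matrix (Fin n) (Fin n) ℂ := A * W with hBdef
  have hB : Bᴴ * B = Matrix.diagonal (fun j => (lam j : ℂ)) := by
    have h : (star W) * (Aᴴ * A) * W = Matrix.diagonal (RCLike.ofReal ∘ hH.eigenvalues) := by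
      simpa using hH.conjStarAlgAut_star_eigenvectorUnitary
    calc Bᴴ * B = (star W) * (Aᴴ * A) * W := by
          simp [hBdef, Matrix.conjTranspose_mul, Matrix.star_eq_conjTranspose, mul_assoc]
      _ = Matrix.diagonal (fun j => (lam j : ℂ)) := by
          rw [h]; rfl
  have hBB : ∀ j k, ∑ i, (starRingEnd ℂ) (B i j) * B i k
      = if j = k then (lam j : ℂ) else 0 := by
    intro j k
    have h := congrFun (congrFun hB j) k
    simpa [Matrix.mul_apply, Matrix.conjTranspose_apply, Matrix.diagonal_apply] using h
  -- columns of B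
  set b : Fin n → EuclideanSpace ℂ (Fin n) := fun j => WithLp.toLp 2 (fun i => B i j) with hbdef
  have hbzero : ∀ j, s j = 0 → b j = 0 := by
    intro j hj
    have hlj : lam j = 0 := by rw [← hssq j, hj]; ring
    have h := hBB j j
    rw [if_pos rfl, hlj] at h
    have h0 : ∑ i, Complex.normSq (B i j) = 0 := by
      have h2 : ((∑ i, Complex.normSq (B i j) : ℝ) : ℂ) = 0 := by
        push_cast
        calc (∑ i, (Complex.normSq (B i j) : ℂ))
            = ∑ i, (starRingEnd ℂ) (B i j) * B i j := by
              refine Finset.sum_congr rfl fun i _ => ?_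
              rw [mul_comm, Complex.mul_conj]
          _ = 0 := by rw [h]; norm_num
      exact_mod_cast h2
    ext i
    have := (Finset.sum_eq_zero_iff_of_nonneg
      (fun i _ => Complex.normSq_nonneg (B i j))).1 h0 i (Finset.mem_univ i)
    exact Complex.normSq_eq_zero.1 this
  set v : Fin n → EuclideanSpace ℂ (Fin n) := fun j => (((s j)⁻¹ : ℝ) : ℂ) • b j with hvdef
  set S : Set (Fin n) := {j | s j ≠ 0} with hSdef
  have hbinner : ∀ j k, (inner ℂ (b j) (b k) : ℂ) = ∑ i, (starRingEnd ℂ) (B i j) * B i k := by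
    intro j k
    simp [hbdef, PiLp.inner_apply, RCLike.inner_apply]
    exact Finset.sum_congr rfl fun i _ => mul_comm _ _
  have hinner : ∀ j k, (inner ℂ (v j) (v k) : ℂ)
      = (((s j)⁻¹ : ℝ) : ℂ) * (((s k)⁻¹ : ℝ) : ℂ) * (if j = k then (lam j : ℂ) else 0) := by
    intro j k
    rw [hvdef]
    simp only []
    rw [inner_smul_left, inner_smul_right, hbinner, hBB, Complex.conj_ofReal]
    ring
  have hon : Orthonormal ℂ (S.restrict v) := by
    rw [orthonormal_iff_ite]
    rintro ⟨j, hj⟩ ⟨k, hk⟩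
    simp only [Set.restrict_apply, Subtype.mk.injEq]
    rw [show S.restrict v ⟨j, hj⟩ = v j from rfl, show S.restrict v ⟨k, hk⟩ = v k from rfl, hinner]
    by_cases hjk : j = k
    · subst hjk
      rw [if_pos rfl, if_pos rfl]
      have hsj : s j ≠ 0 := hj
      have : (((s j)⁻¹ : ℝ) : ℂ) * (((s j)⁻¹ : ℝ) : ℂ) * (lam j : ℂ)
          = (((s j)⁻¹ * (s j)⁻¹ * lam j : ℝ) : ℂ) := by push_cast; ring
      rw [this, ← hssq j]
      have : (s j)⁻¹ * (s j)⁻¹ * s j ^ 2 = 1 := by field_simp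
      rw [this]; norm_num
    · rw [if_neg hjk, if_neg hjk, mul_zero]
  obtain ⟨u, hu⟩ := hon.exists_orthonormalBasis_extension_of_card_eq
    (by simp [finrank_euclideanSpace])
  have hkey : ∀ j, ((s j : ℝ) : ℂ) • u j = b j := by
    intro j
    by_cases hj : s j = 0
    · rw [hbzero j hj, hj]
      simp
    · rw [hu j hj, hvdef]
      simp only [smul_smul]
      rw [← Complex.ofReal_mul, mul_inv_cancel₀ hj]
      simp
  set U : Matrix (Fin n) (Fin n) ℂ :=
    (EuclideanSpace.basisFun (Fin n) ℂ).toBasis.toMatrix u.toBasis with hUdef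
  have hUmem : U ∈ Matrix.unitaryGroup (Fin n) ℂ :=
    (EuclideanSpace.basisFun (Fin n) ℂ).toMatrix_orthonormalBasis_mem_unitary u
  have hUapply : ∀ i j, U i j = u j i := fun i j => rfl
  have hUD : U * Matrix.diagonal (fun j => (s j : ℂ)) = B := by
    ext i j
    rw [Matrix.mul_diagonal, hUapply]
    have := congrArg (fun w => w i) (hkey j)
    simpa [mul_comm] using this
  refine ⟨U, star W, hUmem, Unitary.star_mem hWmem, ?_⟩
  rw [hUD]
  have : B * star W = A := by
    rw [hBdef, mul_assoc, (Matrix.mem_unitaryGroup_iff).1 hWmem, mul_one]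
  rw [this]

private lemma perm_unitary {n : ℕ} (σ : Equiv.Perm (Fin n)) :
    (σ.toPEquiv.toMatrix : Matrix (Fin n) (Fin n) ℂ) ∈ Matrix.unitaryGroup (Fin n) ℂ := by
  rw [Matrix.mem_unitaryGroup_iff']
  have hct : (σ.toPEquiv.toMatrix : Matrix (Fin n) (Fin n) ℂ)ᴴ
      = (σ.toPEquiv.toMatrix)ᵀ := by
    ext i j
    simp [Matrix.conjTranspose_apply, PEquiv.toMatrix_apply, Equiv.toPEquiv_apply,
      Option.mem_def, apply_ite (starRingEnd ℂ)]
  rw [Matrix.star_eq_conjTranspose, hct, ← PEquiv.toMatrix_symm, ← Equiv.toPEquiv_symm,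
    ← PEquiv.toMatrix_trans, ← Equiv.toPEquiv_trans]
  simp

theorem unitarily_invariant_norm_eq_gauge_of_singular_values (n : ℕ)
    (N : Matrix (Fin n) (Fin n) ℂ → ℝ)
    -- N is a norm …
    (hzero : ∀ A, N A = 0 ↔ A = 0)
    (hsmul : ∀ (c : ℂ) A, N (c • A) = ‖c‖ * N A)
    (htriangle : ∀ A B, N (A + B) ≤ N A + N B)
    -- … which is unitarily invariant
    (hinv : ∀ U V : Matrix (Fin n) (Fin n) ℂ, U ∈ Matrix.unitaryGroup (Fin n) ℂ →
      V ∈ Matrix.unitaryGroup (Fin n) ℂ → ∀ A, N (U * A * V) = N A)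
    (Φ : (Fin n → ℝ) → ℝ)
    (hΦ : Φ = fun x => N (Matrix.diagonal (fun i => (x i : ℂ)))) :
    -- (i) Φ is a symmetric gauge function:
    ((∀ x, Φ x = 0 ↔ x = 0)
      ∧ (∀ (c : ℝ) x, Φ (c • x) = |c| * Φ x)
      ∧ (∀ x y, Φ (x + y) ≤ Φ x + Φ y)
      ∧ (∀ (σ : Equiv.Perm (Fin n)) x, Φ (x ∘ σ) = Φ x)
      ∧ (∀ ε : Fin n → ℝ, (∀ i, ε i = 1 ∨ ε i = -1) → ∀ x,
          Φ (fun i => ε i * x i) = Φ x))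
    -- (ii) N is the gauge function evaluated on singular values:
    ∧ (∀ A : Matrix (Fin n) (Fin n) ℂ, N A = Φ (singVals A)) := by
  subst hΦ
  refine ⟨⟨?_, ?_, ?_, ?_, ?_⟩, ?_⟩
  · -- zero
    intro x
    rw [hzero]
    constructor
    · intro h
      funext i
      have := congrFun (congrFun h i) i
      rw [Matrix.diagonal_apply_eq, Matrix.zero_apply] at this
      exact_mod_cast this
    · intro h; subst h; simp
  · -- smul
    intro c x
    beta_reduce
    have : Matrix.diagonal (fun i => ((c • x) i : ℂ))
        = (c : ℂ) • Matrix.diagonal (fun i => (x i : ℂ)) := by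
      have harg : (fun i => (((c • x) i : ℝ) : ℂ)) = (c:ℂ) • fun i => ((x i : ℝ) : ℂ) := by
        funext i; simp [Complex.ofReal_mul]
      rw [harg, Matrix.diagonal_smul]
    rw [this, hsmul, Complex.norm_real, Real.norm_eq_abs]
  · -- triangle
    intro x y
    beta_reduce
    have : Matrix.diagonal (fun i => ((x + y) i : ℂ))
        = Matrix.diagonal (fun i => (x i : ℂ)) + Matrix.diagonal (fun i => (y i : ℂ)) := by
      have harg : (fun i => (((x + y) i : ℝ) : ℂ))
          = (fun i => ((x i : ℝ) : ℂ)) + fun i => ((y i : ℝ) : ℂ) := by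
        funext i; simp
      rw [harg, Matrix.diagonal_add]; rfl
    rw [this]
    exact htriangle _ _
  · -- permutation invariance
    intro σ x
    beta_reduce
    have hsub : Matrix.diagonal (fun i => ((x ∘ σ) i : ℂ))
        = (Matrix.diagonal (fun i => (x i : ℂ))).submatrix σ σ := by
      rw [Matrix.submatrix_diagonal _ _ σ.injective]
      rfl
    have hrepr : (Matrix.diagonal (fun i => (x i : ℂ))).submatrix σ σ
        = σ.toPEquiv.toMatrix * Matrix.diagonal (fun i => (x i : ℂ))
          * σ.symm.toPEquiv.toMatrix := by
      rw [PEquiv.toMatrix_toPEquiv_mul, PEquiv.mul_toMatrix_toPEquiv]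
      simp [Matrix.submatrix_submatrix]
    rw [hsub, hrepr, hinv _ _ (perm_unitary σ) (perm_unitary σ.symm)]
  · -- sign invariance
    intro ε hε x
    beta_reduce
    have hEu : (Matrix.diagonal (fun i => (ε i : ℂ))) ∈ Matrix.unitaryGroup (Fin n) ℂ := by
      rw [Matrix.mem_unitaryGroup_iff']
      rw [Matrix.star_eq_conjTranspose, Matrix.diagonal_conjTranspose,
        Matrix.diagonal_mul_diagonal]
      convert Matrix.diagonal_one with i
      rcases hε i with h | h <;> simp [h, Pi.star_apply, ← Complex.ofReal_neg] <;> norm_num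
    have hED : Matrix.diagonal (fun i => ((ε i * x i : ℝ) : ℂ))
        = Matrix.diagonal (fun i => (ε i : ℂ)) * Matrix.diagonal (fun i => (x i : ℂ)) * 1 := by
      have harg : (fun i => ((ε i * x i : ℝ) : ℂ))
          = fun i => ((ε i : ℝ) : ℂ) * ((x i : ℝ) : ℂ) := by
        funext i; push_cast; rfl
      rw [harg, mul_one, Matrix.diagonal_mul_diagonal]
    rw [hED, hinv _ _ hEu (Submonoid.one_mem _)]
  · -- (ii)
    intro A
    beta_reduce
    obtain ⟨U, V, hU, hV, hA⟩ := exists_svd' A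
    conv_lhs => rw [hA]
    rw [hinv _ _ hU hV]
end
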